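/- arXiv:1709.02297 — 6 statements merged into one kernel-verified Lean document; each statement's English description precedes it below -/
import Mathlib

section
/- Let i ∈ ℕ, K₀ a dyadic interval, and let f₁,...,f_i ∈ SL^∞ and g₁,...,g_i ∈ (SL^∞)* satisfy ∑_j ‖f_j‖_{SL^∞} ≤ 1 and ∑_j ‖g_j‖_{(SL^∞)*} ≤ |K₀|. Define ω(K) = ∑_{j=1}^{i} |⟨f_j, h_K⟩| + |⟨h_K, g_j⟩| for K ∈ 𝒟. Given τ > 0 and r ∈ ℕ₀ with 2^{−r} ≤ |K₀|, let 𝒢_k(K₀) = { K ∈ 𝒟_k : K ⊆ K₀, ω(K) ≤ τ|K| } for k ≥ r. Then for each ρ > 0 there exists an integer k with r ≤ k ≤ ⌊4/(ρ²τ²)⌋ + r such that |⋃ 𝒢_k(K₀)| ≥ (1−ρ)|K₀|. -/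
open MeasureTheory

/-- The dyadic interval `[j/2^k, (j+1)/2^k)`. -/
noncomputable def dyadicSet (k j : ℕ) : Set ℝ :=
  Set.Ico ((j : ℝ) / 2 ^ k) (((j : ℝ) + 1) / 2 ^ k)

/-- The `L^∞`-normalized Haar function supported on `[j/2^k, (j+1)/2^k)`. -/
noncomputable def haar (k j : ℕ) (x : ℝ) : ℝ :=
  if x ∈ Set.Ico ((j : ℝ) / 2 ^ k) (((j : ℝ) + 1 / 2) / 2 ^ k) then 1
  else if x ∈ Set.Ico (((j : ℝ) + 1 / 2) / 2 ^ k) (((j : ℝ) + 1) / 2 ^ k) then -1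
  else 0

/-- The `SL^∞` norm of a (formal) Haar series with coefficients `a k j` (for the dyadic
interval of level `k` and position `j`): the essential/pointwise supremum over `[0,1)` of the
square function. -/
noncomputable def slNorm (a : ℕ → ℕ → ℝ) : ENNReal :=
  ⨆ x ∈ Set.Ico (0 : ℝ) 1,
    (∑' k : ℕ, ∑ j ∈ Finset.range (2 ^ k),
      ENNReal.ofReal ((a k j) ^ 2 * (haar k j x) ^ 2)) ^ (1 / 2 : ℝ)

lemma cast_div_pow_le (a b k K : ℕ) (h : k ≤ K) :
    (a:ℝ)/2^k ≤ (b:ℝ)/2^K ↔ a * 2^(K-k) ≤ b := by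
  rw [div_le_div_iff₀ (by positivity) (by positivity)]
  have e : (2:ℝ)^K = 2^(K-k) * 2^k := by rw [← pow_add]; congr 1; omega
  rw [e, ← mul_assoc, mul_le_mul_iff_of_pos_right (by positivity)]
  norm_cast

lemma cast_div_pow_le' (a b k K : ℕ) (h : k ≤ K) :
    (b:ℝ)/2^K ≤ (a:ℝ)/2^k ↔ b ≤ a * 2^(K-k) := by
  rw [div_le_div_iff₀ (by positivity) (by positivity)]
  have e : (2:ℝ)^K = 2^(K-k) * 2^k := by rw [← pow_add]; congr 1; omega
  rw [e, ← mul_assoc, mul_le_mul_iff_of_pos_right (by positivity)]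
  norm_cast

lemma cast_div_pow_lt (a b k K : ℕ) (h : k ≤ K) :
    (b:ℝ)/2^K < (a:ℝ)/2^k ↔ b < a * 2^(K-k) := by
  rw [← not_le, cast_div_pow_le a b k K h, not_le]

lemma haar_sq (k j : ℕ) (x : ℝ) :
    (haar k j x)^2 = if x ∈ Set.Ico ((j:ℝ)/2^k) (((j:ℝ)+1)/2^k) then 1 else 0 := by
  have h2 : (0:ℝ) < 2^k := by positivity
  have hmid1 : ((j:ℝ))/2^k ≤ ((j:ℝ)+1/2)/2^k := by gcongr; linarith
  have hmid2 : ((j:ℝ)+1/2)/2^k ≤ ((j:ℝ)+1)/2^k := by gcongr; linarith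
  unfold haar
  by_cases h1 : x ∈ Set.Ico ((j:ℝ)/2^k) (((j:ℝ)+1/2)/2^k)
  · rw [if_pos h1, if_pos ⟨h1.1, lt_of_lt_of_le h1.2 hmid2⟩]; norm_num
  · by_cases hw : x ∈ Set.Ico ((j:ℝ)/2^k) (((j:ℝ)+1)/2^k)
    · have hx2 : x ∈ Set.Ico (((j:ℝ)+1/2)/2^k) (((j:ℝ)+1)/2^k) := by
        refine ⟨?_, hw.2⟩
        by_contra hc
        exact h1 ⟨hw.1, lt_of_not_ge hc⟩
      rw [if_neg h1, if_pos hx2, if_pos hw]; norm_num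
    · have hx2 : x ∉ Set.Ico (((j:ℝ)+1/2)/2^k) (((j:ℝ)+1)/2^k) := by
        intro hc; exact hw ⟨le_trans hmid1 hc.1, hc.2⟩
      rw [if_neg h1, if_neg hx2, if_neg hw]; norm_num

lemma dyadic_mem_unique {k l l' : ℕ} {x : ℝ}
    (h : x ∈ Set.Ico ((l:ℝ)/2^k) (((l:ℝ)+1)/2^k))
    (h' : x ∈ Set.Ico ((l':ℝ)/2^k) (((l':ℝ)+1)/2^k)) : l = l' := by
  have h2 : (0:ℝ) < 2^k := by positivity
  have a1 : (l:ℝ) ≤ x * 2^k := (div_le_iff₀ h2).mp h.1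
  have a2 : x * 2^k < (l:ℝ)+1 := (lt_div_iff₀ h2).mp h.2
  have b1 : (l':ℝ) ≤ x * 2^k := (div_le_iff₀ h2).mp h'.1
  have b2 : x * 2^k < (l':ℝ)+1 := (lt_div_iff₀ h2).mp h'.2
  have : (l:ℤ) = ⌊x * 2^k⌋ := by
    rw [eq_comm, Int.floor_eq_iff]; constructor <;> push_cast <;> linarith
  have : (l':ℤ) = ⌊x * 2^k⌋ := by
    rw [eq_comm, Int.floor_eq_iff]; constructor <;> push_cast <;> linarith
  omega

lemma dyadicSet_subset_iff (n₀ l₀ k l : ℕ) (h : n₀ ≤ k) :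
    dyadicSet k l ⊆ dyadicSet n₀ l₀ ↔
      l₀ * 2^(k-n₀) ≤ l ∧ l + 1 ≤ (l₀+1) * 2^(k-n₀) := by
  unfold dyadicSet
  rw [Set.Ico_subset_Ico_iff
    (by rw [div_lt_div_iff₀ (by positivity) (by positivity)]
        nlinarith [pow_pos (show (0:ℝ) < 2 by norm_num) k])]
  have e1 := cast_div_pow_le l₀ l n₀ k h
  have e2 := cast_div_pow_le' (l₀+1) (l+1) n₀ k h
  push_cast at e1 e2
  constructor
  · rintro ⟨h1, h2⟩
    exact ⟨by exact_mod_cast e1.mp h1, by exact_mod_cast e2.mp h2⟩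
  · rintro ⟨h1, h2⟩
    exact ⟨e1.mpr (by exact_mod_cast h1), e2.mpr (by exact_mod_cast h2)⟩

lemma volume_biUnion_dyadic (k : ℕ) (s : Finset ℕ) :
    volume (⋃ l ∈ s, dyadicSet k l) =
      (s.card : ENNReal) * ENNReal.ofReal (((2:ℝ)^k)⁻¹) := by
  have h2 : (0:ℝ) < 2^k := by positivity
  rw [measure_biUnion_finset]
  · rw [Finset.sum_congr rfl (fun l _ => ?_), Finset.sum_const, nsmul_eq_mul]
    show volume (dyadicSet k l) = _
    rw [dyadicSet, Real.volume_Ico]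
    congr 1
    field_simp
    ring
  · intro a _ b _ hab
    rw [Function.onFun, dyadicSet, dyadicSet, Set.Ico_disjoint_Ico]
    rcases Nat.lt_or_ge a b with hlt | hge
    · refine le_trans (min_le_left _ _) (le_trans ?_ (le_max_right _ _))
      gcongr
      exact_mod_cast hlt
    · have hlt : b < a := lt_of_le_of_ne hge (Ne.symm hab)
      refine le_trans (min_le_right _ _) (le_trans ?_ (le_max_left _ _))
      gcongr
      exact_mod_cast hlt
  · intro l _
    exact measurableSet_Ico

lemma level_sum_le_one (b : ℕ → ℕ → ℝ) (k : ℕ) (x : ℝ) (hb : ∀ l, (b k l)^2 ≤ 1) :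
    ∑ l ∈ Finset.range (2^k), ENNReal.ofReal ((b k l)^2 * (haar k l x)^2) ≤ 1 := by
  classical
  have step : ∀ l ∈ Finset.range (2^k),
      ENNReal.ofReal ((b k l)^2 * (haar k l x)^2) ≤
        (if x ∈ Set.Ico ((l:ℝ)/2^k) (((l:ℝ)+1)/2^k) then (1:ENNReal) else 0) := by
    intro l _
    rw [haar_sq]
    split
    · rw [mul_one]
      exact ENNReal.ofReal_le_one.mpr (hb l)
    · simp
  refine le_trans (Finset.sum_le_sum step) ?_
  rw [Finset.sum_boole]
  rw [show (1:ENNReal) = ((1:ℕ):ENNReal) by norm_num, Nat.cast_le]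
  apply Finset.card_le_one.mpr
  intro a ha c hc
  have ha' := (Finset.mem_filter.mp ha).2
  have hc' := (Finset.mem_filter.mp hc).2
  push_cast at ha' hc'
  exact dyadic_mem_unique ha' hc' 

lemma slNorm_le_sqrt (b : ℕ → ℕ → ℝ) (r N : ℕ)
    (hb0 : ∀ k l, (k < r ∨ r + N ≤ k) → b k l = 0)
    (hb1 : ∀ k l, (b k l)^2 ≤ 1) :
    slNorm b ≤ (N : ENNReal) ^ (1/2 : ℝ) := by
  rw [slNorm]
  refine iSup₂_le fun x hx => ?_
  refine ENNReal.rpow_le_rpow ?_ (by norm_num)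
  have hz : ∀ k ∉ Finset.Ico r (r+N),
      ∑ j ∈ Finset.range (2^k), ENNReal.ofReal ((b k j)^2 * (haar k j x)^2) = 0 := by
    intro k hk
    rw [Finset.mem_Ico, not_and_or, not_le, not_lt] at hk
    refine Finset.sum_eq_zero fun j _ => ?_
    rw [hb0 k j hk]
    simp
  rw [tsum_eq_sum hz]
  calc ∑ k ∈ Finset.Ico r (r+N), _ ≤ ∑ _k ∈ Finset.Ico r (r+N), (1:ENNReal) :=
        Finset.sum_le_sum fun k _ => level_sum_le_one b k x (hb1 k)
    _ = N := by simp

lemma finsum_le_tsum (g : ℕ × ℕ → ENNReal) (P : Finset (ℕ × ℕ))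
    (hP : ∀ p ∈ P, p.2 < 2^p.1) :
    ∑ p ∈ P, g p ≤ ∑' k : ℕ, ∑ j ∈ Finset.range (2^k), g (k, j) := by
  classical
  set T := P.image Prod.fst with hT
  set Q := T.biUnion (fun k => (Finset.range (2^k)).image (fun j => (k, j))) with hQ
  have hPQ : P ⊆ Q := by
    intro p hp
    rw [hQ, Finset.mem_biUnion]
    exact ⟨p.1, Finset.mem_image_of_mem _ hp,
      by rw [Finset.mem_image]; exact ⟨p.2, Finset.mem_range.mpr (hP p hp), rfl⟩⟩
  calc ∑ p ∈ P, g p ≤ ∑ p ∈ Q, g p := Finset.sum_le_sum_of_subset hPQ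
    _ = ∑ k ∈ T, ∑ j ∈ Finset.range (2^k), g (k, j) := by
        rw [hQ, Finset.sum_biUnion]
        · refine Finset.sum_congr rfl fun k _ => ?_
          rw [Finset.sum_image (fun a _ b _ h => by simpa using (Prod.mk.injEq _ _ _ _ ▸ h).2)]
        · intro a _ b _ hab
          simp only [Finset.disjoint_left, Finset.mem_image]
          rintro p ⟨j, _, rfl⟩ ⟨j', _, h⟩
          exact hab (by simpa using (Prod.mk.injEq _ _ _ _ ▸ h.symm).1)
    _ ≤ _ := ENNReal.sum_le_tsum T

lemma sq_fn_le (a : ℕ → ℕ → ℝ) (x : ℝ) (hx : x ∈ Set.Ico (0:ℝ) 1) :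
    (∑' k : ℕ, ∑ j ∈ Finset.range (2^k),
      ENNReal.ofReal ((a k j)^2 * (haar k j x)^2)) ≤ (slNorm a)^2 := by
  have h1 : (∑' k : ℕ, ∑ j ∈ Finset.range (2^k),
      ENNReal.ofReal ((a k j)^2 * (haar k j x)^2)) ^ (1/2 : ℝ) ≤ slNorm a := by
    rw [slNorm]
    exact le_iSup₂ (f := fun (x : ℝ) (_ : x ∈ Set.Ico (0:ℝ) 1) =>
      (∑' k : ℕ, ∑ j ∈ Finset.range (2^k),
        ENNReal.ofReal ((a k j)^2 * (haar k j x)^2)) ^ (1/2 : ℝ)) x hx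
  have h2 := ENNReal.rpow_le_rpow h1 (show (0:ℝ) ≤ 2 by norm_num)
  rw [← ENNReal.rpow_mul] at h2
  norm_num [ENNReal.rpow_one] at h2
  rw [← ENNReal.rpow_natCast (slNorm a) 2]
  exact_mod_cast h2

lemma key_avg (a : ℕ → ℕ → ℝ) (n₀ l₀ M : ℕ) (hl₀ : l₀ < 2^n₀) (hnM : n₀ ≤ M)
    (hfin : slNorm a ≠ ⊤) (P : Finset (ℕ × ℕ))
    (hP : ∀ p ∈ P, n₀ ≤ p.1 ∧ p.1 < M ∧ l₀ * 2^(p.1-n₀) ≤ p.2 ∧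
      p.2 + 1 ≤ (l₀+1) * 2^(p.1-n₀)) :
    ∑ p ∈ P, (a p.1 p.2)^2 * ((2:ℝ)^p.1)⁻¹ ≤ (slNorm a).toReal^2 * ((2:ℝ)^n₀)⁻¹ := by
  classical
  set DM := Finset.Ico (l₀ * 2^(M-n₀)) ((l₀+1) * 2^(M-n₀)) with hDM
  have cardDM : DM.card = 2^(M-n₀) := by
    rw [hDM, Nat.card_Ico, add_mul, one_mul, Nat.add_sub_cancel_left]
  have hP2 : ∀ p ∈ P, p.2 < 2^p.1 := by
    intro p hp
    obtain ⟨h1, h2, h3, h4⟩ := hP p hp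
    calc p.2 < p.2 + 1 := Nat.lt_succ_self _
      _ ≤ (l₀+1) * 2^(p.1-n₀) := h4
      _ ≤ 2^n₀ * 2^(p.1-n₀) := Nat.mul_le_mul_right _ hl₀
      _ = 2^p.1 := by rw [← pow_add]; congr 1; omega
  -- counting claim
  have count : ∀ p ∈ P,
      ∑ m ∈ DM, (haar p.1 p.2 ((m:ℝ)/2^M))^2 = (2:ℝ)^(M - p.1) := by
    intro p hp
    obtain ⟨h1, h2, h3, h4⟩ := hP p hp
    have hkM : p.1 ≤ M := le_of_lt h2
    have hsub : Finset.Ico (p.2 * 2^(M-p.1)) ((p.2+1) * 2^(M-p.1)) ⊆ DM := by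
      intro m hm
      rw [Finset.mem_Ico] at hm
      rw [hDM, Finset.mem_Ico]
      constructor
      · calc l₀ * 2^(M-n₀) = l₀ * 2^(p.1-n₀) * 2^(M-p.1) := by
              rw [mul_assoc, ← pow_add]; congr 2; omega
          _ ≤ p.2 * 2^(M-p.1) := Nat.mul_le_mul_right _ h3
          _ ≤ m := hm.1
      · calc m < (p.2+1) * 2^(M-p.1) := hm.2
          _ ≤ (l₀+1) * 2^(p.1-n₀) * 2^(M-p.1) := Nat.mul_le_mul_right _ h4
          _ = (l₀+1) * 2^(M-n₀) := by rw [mul_assoc, ← pow_add]; congr 2; omega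
    have hval : ∀ m : ℕ, (haar p.1 p.2 ((m:ℝ)/2^M))^2 =
        if m ∈ Finset.Ico (p.2 * 2^(M-p.1)) ((p.2+1) * 2^(M-p.1)) then (1:ℝ) else 0 := by
      intro m
      rw [haar_sq]
      have e1 := cast_div_pow_le p.2 m p.1 M hkM
      have e2 := cast_div_pow_lt (p.2+1) m p.1 M hkM
      push_cast at e1 e2
      refine if_congr ?_ rfl rfl
      rw [Set.mem_Ico, Finset.mem_Ico]
      exact and_congr e1 e2
    rw [Finset.sum_congr rfl (fun m _ => hval m), Finset.sum_boole]
    have : DM.filter (· ∈ Finset.Ico (p.2 * 2^(M-p.1)) ((p.2+1) * 2^(M-p.1)))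
        = Finset.Ico (p.2 * 2^(M-p.1)) ((p.2+1) * 2^(M-p.1)) := by
      rw [Finset.filter_mem_eq_inter, Finset.inter_eq_right.mpr hsub]
    rw [this, Nat.card_Ico, add_mul, one_mul, Nat.add_sub_cancel_left]
    norm_num
  -- pointwise bound
  have bound : ∀ m ∈ DM,
      ∑ p ∈ P, (a p.1 p.2)^2 * (haar p.1 p.2 ((m:ℝ)/2^M))^2 ≤ (slNorm a).toReal^2 := by
    intro m hm
    rw [hDM, Finset.mem_Ico] at hm
    have hx : (m:ℝ)/2^M ∈ Set.Ico (0:ℝ) 1 := by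
      constructor
      · positivity
      · rw [div_lt_one (by positivity)]
        have : m < 2^M := by
          calc m < (l₀+1) * 2^(M-n₀) := hm.2
            _ ≤ 2^n₀ * 2^(M-n₀) := Nat.mul_le_mul_right _ hl₀
            _ = 2^M := by rw [← pow_add]; congr 1; omega
        exact_mod_cast this
    have hof : ENNReal.ofReal (∑ p ∈ P, (a p.1 p.2)^2 * (haar p.1 p.2 ((m:ℝ)/2^M))^2)
        = ∑ p ∈ P, ENNReal.ofReal ((a p.1 p.2)^2 * (haar p.1 p.2 ((m:ℝ)/2^M))^2) :=
      ENNReal.ofReal_sum_of_nonneg (fun p _ => by positivity)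
    have hle : ENNReal.ofReal (∑ p ∈ P, (a p.1 p.2)^2 * (haar p.1 p.2 ((m:ℝ)/2^M))^2)
        ≤ (slNorm a)^2 := by
      rw [hof]
      exact le_trans
        (finsum_le_tsum (fun q => ENNReal.ofReal ((a q.1 q.2)^2 * (haar q.1 q.2 ((m:ℝ)/2^M))^2)) P hP2)
        (sq_fn_le a _ hx)
    have := (ENNReal.ofReal_le_iff_le_toReal (by
      exact ENNReal.pow_ne_top hfin)).mp hle
    rwa [ENNReal.toReal_pow] at this
  -- combine
  have swap : ∑ m ∈ DM, ∑ p ∈ P, (a p.1 p.2)^2 * (haar p.1 p.2 ((m:ℝ)/2^M))^2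
      = ∑ p ∈ P, (a p.1 p.2)^2 * (2:ℝ)^(M - p.1) := by
    rw [Finset.sum_comm]
    exact Finset.sum_congr rfl fun p hp => by rw [← Finset.mul_sum, count p hp]
  have main : ∑ p ∈ P, (a p.1 p.2)^2 * ((2:ℝ)^p.1)⁻¹
      = ((2:ℝ)^M)⁻¹ * ∑ m ∈ DM, ∑ p ∈ P, (a p.1 p.2)^2 * (haar p.1 p.2 ((m:ℝ)/2^M))^2 := by
    rw [swap, Finset.mul_sum]
    refine Finset.sum_congr rfl fun p hp => ?_
    have hkM : p.1 ≤ M := le_of_lt (hP p hp).2.1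
    have e : (2:ℝ)^(M - p.1) = 2^M * ((2:ℝ)^p.1)⁻¹ := by
      field_simp
      rw [← pow_add]; congr 1; omega
    rw [e]
    have h1 : (2:ℝ)^p.1 ≠ 0 := by positivity
    have h2 : (2:ℝ)^M ≠ 0 := by positivity
    field_simp
  have hsum := Finset.sum_le_card_nsmul DM _ _ bound
  rw [nsmul_eq_mul, cardDM] at hsum
  rw [main]
  have e2 : (2:ℝ)^(M-n₀) * 2^n₀ = 2^M := by rw [← pow_add]; congr 1; omega
  calc ((2:ℝ)^M)⁻¹ * ∑ m ∈ DM, ∑ p ∈ P, (a p.1 p.2)^2 * (haar p.1 p.2 ((m:ℝ)/2^M))^2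
      ≤ ((2:ℝ)^M)⁻¹ * (((2^(M-n₀) : ℕ) : ℝ) * (slNorm a).toReal^2) :=
        mul_le_mul_of_nonneg_left hsum (by positivity)
    _ = (slNorm a).toReal^2 * ((2:ℝ)^n₀)⁻¹ := by
        push_cast
        field_simp
        linear_combination (slNorm a).toReal^2 * e2

set_option maxHeartbeats 1000000 in
/-- The combinatorial lemma (Lemma 2.5/`lem:comb-1`): given `f_1,…,f_i ∈ SL^∞` (represented by
their Haar coefficients) with `∑ ‖f_j‖_{SL^∞} ≤ 1` and functionals `g_1,…,g_i ∈ (SL^∞)^*`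
(represented by their actions `d j` on the Haar functions, with norm bounds `G j`) with
`∑ ‖g_j‖ ≤ |K₀|`, for the local frequency weight
`ω(K) = ∑_j |⟨f_j, h_K⟩| + |⟨h_K, g_j⟩|`, for every `ρ > 0` there is a level `k` with
`r ≤ k ≤ ⌊4/(ρ²τ²)⌋ + r` such that the intervals `K ∈ 𝒟_k` with `K ⊆ K₀` and
`ω(K) ≤ τ|K|` cover at least `(1-ρ)|K₀|`. -/
theorem comb_lemma_one (i : ℕ) (n₀ l₀ : ℕ) (hK₀ : l₀ < 2 ^ n₀)
    (f : Fin i → ℕ → ℕ → ℝ)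
    (hf : ∑ j, slNorm (f j) ≤ 1)
    (d : Fin i → ℕ → ℕ → ℝ) (G : Fin i → ℝ) (hGpos : ∀ j, 0 ≤ G j)
    (hg : ∀ (j : Fin i) (s : Finset (ℕ × ℕ)), (∀ p ∈ s, p.2 < 2 ^ p.1) →
      ∀ u : ℕ × ℕ → ℝ,
        |∑ p ∈ s, u p * d j p.1 p.2| ≤
          G j * (slNorm (fun k l => if (k, l) ∈ s then u (k, l) else 0)).toReal)
    (hG : ∑ j, G j ≤ ((2 : ℝ) ^ n₀)⁻¹)
    (τ : ℝ) (hτ : 0 < τ) (r : ℕ) (hr : ((2 : ℝ) ^ r)⁻¹ ≤ ((2 : ℝ) ^ n₀)⁻¹)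
    (ρ : ℝ) (hρ : 0 < ρ) :
    ∃ k : ℕ, r ≤ k ∧ k ≤ Nat.floor (4 / (ρ ^ 2 * τ ^ 2)) + r ∧
      ENNReal.ofReal ((1 - ρ) * ((2 : ℝ) ^ n₀)⁻¹) ≤
        volume (⋃ l ∈ {l : ℕ | l < 2 ^ k ∧ dyadicSet k l ⊆ dyadicSet n₀ l₀ ∧
          (∑ j, (|f j k l| * ((2 : ℝ) ^ k)⁻¹ + |d j k l|)) ≤ τ * ((2 : ℝ) ^ k)⁻¹},
          dyadicSet k l) := by
  classical
  rcases le_or_gt 1 ρ with hρ1 | hρ1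
  · refine ⟨r, le_refl r, Nat.le_add_left r _, ?_⟩
    rw [ENNReal.ofReal_eq_zero.mpr ?_]
    · exact zero_le
    · have h1 : (0:ℝ) < ((2:ℝ)^n₀)⁻¹ := by positivity
      nlinarith
  have hn₀r : n₀ ≤ r := by
    have hpow : (2:ℝ)^n₀ ≤ 2^r := (inv_le_inv₀ (by positivity) (by positivity)).mp hr
    exact (pow_le_pow_iff_right₀ (by norm_num : (1:ℝ) < 2)).mp hpow
  have epow : ∀ k : ℕ, n₀ ≤ k → (2:ℝ)^(k-n₀) * 2^n₀ = 2^k := by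
    intro k hk; rw [← pow_add]; congr 1; omega
  set F := Nat.floor (4 / (ρ ^ 2 * τ ^ 2)) with hF
  set N := F + 1 with hN
  by_contra hcon
  push_neg at hcon
  -- good/bad sets
  set good : ℕ → Finset ℕ := fun k => (Finset.range (2^k)).filter
    (fun l => dyadicSet k l ⊆ dyadicSet n₀ l₀ ∧
      (∑ j, (|f j k l| * ((2:ℝ)^k)⁻¹ + |d j k l|)) ≤ τ * ((2:ℝ)^k)⁻¹) with hgood
  set Dk : ℕ → Finset ℕ := fun k => Finset.Ico (l₀ * 2^(k-n₀)) ((l₀+1) * 2^(k-n₀)) with hDk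
  set bad : ℕ → Finset ℕ := fun k => Dk k \ good k with hbad
  have cardDk : ∀ k, (Dk k).card = 2^(k-n₀) := by
    intro k; rw [hDk]; simp only [Nat.card_Ico, add_mul, one_mul, Nat.add_sub_cancel_left]
  have goodDk : ∀ k, n₀ ≤ k → good k ⊆ Dk k := by
    intro k hk l hl
    rw [hgood, Finset.mem_filter] at hl
    have := (dyadicSet_subset_iff n₀ l₀ k l hk).mp hl.2.1
    rw [hDk, Finset.mem_Ico]
    omega
  have badmem : ∀ k, n₀ ≤ k → ∀ l ∈ bad k,
      (l₀ * 2^(k-n₀) ≤ l ∧ l + 1 ≤ (l₀+1) * 2^(k-n₀)) ∧ l < 2^k ∧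
        τ * ((2:ℝ)^k)⁻¹ < ∑ j, (|f j k l| * ((2:ℝ)^k)⁻¹ + |d j k l|) := by
    intro k hk l hl
    rw [hbad, Finset.mem_sdiff, hDk, Finset.mem_Ico] at hl
    have harith : l₀ * 2^(k-n₀) ≤ l ∧ l + 1 ≤ (l₀+1) * 2^(k-n₀) := ⟨hl.1.1, hl.1.2⟩
    have hlt : l < 2^k := by
      have : (l₀+1) * 2^(k-n₀) ≤ 2^n₀ * 2^(k-n₀) := Nat.mul_le_mul_right _ hK₀
      have e : 2^n₀ * 2^(k-n₀) = 2^k := by rw [← pow_add]; congr 1; omega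
      omega
    refine ⟨harith, hlt, ?_⟩
    by_contra hc
    push_neg at hc
    exact hl.2 (by
      rw [hgood, Finset.mem_filter]
      exact ⟨Finset.mem_range.mpr hlt,
        (dyadicSet_subset_iff n₀ l₀ k l hk).mpr harith, hc⟩)
  -- volume hypothesis → card bounds
  have hvol : ∀ t, t < N → ((good (r+t)).card : ℝ) * ((2:ℝ)^(r+t))⁻¹
      < (1-ρ) * ((2:ℝ)^n₀)⁻¹ := by
    intro t ht
    have hc := hcon (r+t) (Nat.le_add_right r t) (by omega)
    have hseteq : {l : ℕ | l < 2^(r+t) ∧ dyadicSet (r+t) l ⊆ dyadicSet n₀ l₀ ∧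
        (∑ j, (|f j (r+t) l| * ((2:ℝ)^(r+t))⁻¹ + |d j (r+t) l|)) ≤ τ * ((2:ℝ)^(r+t))⁻¹}
        = ↑(good (r+t)) := by
      ext l
      rw [hgood]
      simp only [Set.mem_setOf_eq, Finset.coe_filter, Finset.mem_range, Set.mem_setOf_eq]
    rw [hseteq, Finset.set_biUnion_coe, volume_biUnion_dyadic,
      ← ENNReal.ofReal_natCast, ← ENNReal.ofReal_mul (Nat.cast_nonneg _)] at hc
    exact (ENNReal.ofReal_lt_ofReal_iff
      (mul_pos (by linarith) (by positivity : (0:ℝ) < ((2:ℝ)^n₀)⁻¹))).mp hc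
  have badcard : ∀ t, t < N → ρ * (2:ℝ)^(r+t-n₀) < ((bad (r+t)).card : ℝ) := by
    intro t ht
    have h1 := hvol t ht
    have hsub := goodDk (r+t) (by omega)
    have hcard : (bad (r+t)).card = 2^(r+t-n₀) - (good (r+t)).card := by
      rw [hbad, Finset.card_sdiff_of_subset hsub, cardDk]
    have hle : (good (r+t)).card ≤ 2^(r+t-n₀) := cardDk (r+t) ▸ Finset.card_le_card hsub
    have hcR : ((bad (r+t)).card : ℝ) = 2^(r+t-n₀) - (good (r+t)).card := by
      rw [hcard, Nat.cast_sub hle]; push_cast; ring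
    have hgR : ((good (r+t)).card : ℝ) < (1-ρ) * 2^(r+t-n₀) := by
      have h2k : (0:ℝ) < 2^(r+t) := by positivity
      have e' : (2:ℝ)^(r+t-n₀) = 2^(r+t) * ((2:ℝ)^n₀)⁻¹ := by
        field_simp
        linarith [epow (r+t) (by omega)]
      rw [e']
      have h1' : ((good (r+t)).card : ℝ) / 2^(r+t) < (1-ρ) * ((2:ℝ)^n₀)⁻¹ := by
        rw [div_eq_mul_inv]; exact h1
      calc ((good (r+t)).card : ℝ) < (1-ρ) * ((2:ℝ)^n₀)⁻¹ * 2^(r+t) := (div_lt_iff₀ h2k).mp h1'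
        _ = (1-ρ) * (2^(r+t) * ((2:ℝ)^n₀)⁻¹) := by ring
    rw [hcR]
    linarith
  -- the pair set
  set P : Finset (ℕ×ℕ) :=
    (Finset.range N).biUnion (fun t => (bad (r+t)).image (fun l => (r+t, l))) with hPdef
  have sumP : ∀ F' : ℕ → ℕ → ℝ, ∑ p ∈ P, F' p.1 p.2
      = ∑ t ∈ Finset.range N, ∑ l ∈ bad (r+t), F' (r+t) l := by
    intro F'
    rw [hPdef, Finset.sum_biUnion]
    · exact Finset.sum_congr rfl fun t _ =>
        Finset.sum_image (fun a _ b _ hab => by simpa using hab)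
    · intro a _ b _ hab
      simp only [Finset.disjoint_left, Finset.mem_image]
      rintro p ⟨l, _, rfl⟩ ⟨l', _, hl'⟩
      exact hab (by simpa using (Prod.ext_iff.mp hl'.symm).1)
  have memP : ∀ p ∈ P, r ≤ p.1 ∧ p.1 < r + N ∧ p.2 ∈ bad p.1 := by
    intro p hp
    rw [hPdef, Finset.mem_biUnion] at hp
    obtain ⟨t, ht, hmem⟩ := hp
    obtain ⟨l, hl, hle⟩ := Finset.mem_image.mp hmem
    rw [Finset.mem_range] at ht
    subst hle
    exact ⟨Nat.le_add_right r t, by omega, hl⟩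
  have hP2 : ∀ p ∈ P, p.2 < 2^p.1 := by
    intro p hp
    obtain ⟨h1, h2, h3⟩ := memP p hp
    exact ((badmem p.1 (by omega) p.2 h3).2).1
  have hPfull : ∀ p ∈ P, n₀ ≤ p.1 ∧ p.1 < r + N ∧ l₀ * 2^(p.1-n₀) ≤ p.2 ∧
      p.2 + 1 ≤ (l₀+1) * 2^(p.1-n₀) := by
    intro p hp
    obtain ⟨h1, h2, h3⟩ := memP p hp
    obtain ⟨⟨a1, a2⟩, _, _⟩ := badmem p.1 (by omega) p.2 h3
    exact ⟨by omega, h2, a1, a2⟩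
  -- lower bound
  have lb : (N:ℝ) * (τ * ρ * ((2:ℝ)^n₀)⁻¹)
      < ∑ p ∈ P, ∑ j, (|f j p.1 p.2| * ((2:ℝ)^p.1)⁻¹ + |d j p.1 p.2|) := by
    rw [sumP (fun k l => ∑ j, (|f j k l| * ((2:ℝ)^k)⁻¹ + |d j k l|))]
    have perlevel : ∀ t ∈ Finset.range N, τ * ρ * ((2:ℝ)^n₀)⁻¹
        < ∑ l ∈ bad (r+t), ∑ j, (|f j (r+t) l| * ((2:ℝ)^(r+t))⁻¹ + |d j (r+t) l|) := by
      intro t ht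
      rw [Finset.mem_range] at ht
      have h2k : (0:ℝ) < 2^(r+t) := by positivity
      have e' : ((2:ℝ)^n₀)⁻¹ = 2^(r+t-n₀) * ((2:ℝ)^(r+t))⁻¹ := by
        field_simp
        linarith [epow (r+t) (by omega)]
      calc τ * ρ * ((2:ℝ)^n₀)⁻¹ = τ * ((2:ℝ)^(r+t))⁻¹ * (ρ * 2^(r+t-n₀)) := by
            rw [e']; ring
        _ < τ * ((2:ℝ)^(r+t))⁻¹ * ((bad (r+t)).card : ℝ) := by
            have := badcard t ht
            have hpos : (0:ℝ) < τ * ((2:ℝ)^(r+t))⁻¹ := by positivity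
            exact (mul_lt_mul_iff_right₀ hpos).mpr this
        _ = ∑ _l ∈ bad (r+t), τ * ((2:ℝ)^(r+t))⁻¹ := by
            rw [Finset.sum_const, nsmul_eq_mul]; ring
        _ ≤ _ := Finset.sum_le_sum fun l hl =>
            le_of_lt ((badmem (r+t) (by omega) l hl).2.2)
    calc (N:ℝ) * (τ * ρ * ((2:ℝ)^n₀)⁻¹)
        = ∑ _t ∈ Finset.range N, τ * ρ * ((2:ℝ)^n₀)⁻¹ := by
          rw [Finset.sum_const, Finset.card_range, nsmul_eq_mul]
      _ < _ := Finset.sum_lt_sum_of_nonempty (by simp [hN]) perlevel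
  -- split the sum
  have split : ∑ p ∈ P, ∑ j, (|f j p.1 p.2| * ((2:ℝ)^p.1)⁻¹ + |d j p.1 p.2|)
      = (∑ j, ∑ p ∈ P, |f j p.1 p.2| * ((2:ℝ)^p.1)⁻¹)
        + (∑ j, ∑ p ∈ P, |d j p.1 p.2|) := by
    rw [Finset.sum_comm, ← Finset.sum_add_distrib]
    exact Finset.sum_congr rfl fun j _ => Finset.sum_add_distrib
  -- weight bound
  have Wb : ∑ p ∈ P, ((2:ℝ)^p.1)⁻¹ ≤ (N:ℝ) * ((2:ℝ)^n₀)⁻¹ := by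
    rw [sumP (fun k _ => ((2:ℝ)^k)⁻¹)]
    have hlev : ∀ t ∈ Finset.range N,
        ∑ _l ∈ bad (r+t), ((2:ℝ)^(r+t))⁻¹ ≤ ((2:ℝ)^n₀)⁻¹ := by
      intro t ht
      rw [Finset.sum_const, nsmul_eq_mul]
      have hcb : ((bad (r+t)).card : ℝ) ≤ 2^(r+t-n₀) := by
        have : (bad (r+t)).card ≤ (Dk (r+t)).card :=
          Finset.card_le_card (hbad ▸ Finset.sdiff_subset)
        rw [cardDk] at this
        exact_mod_cast this
      have e' : ((2:ℝ)^n₀)⁻¹ = 2^(r+t-n₀) * ((2:ℝ)^(r+t))⁻¹ := by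
        field_simp
        linarith [epow (r+t) (by omega)]
      rw [e']
      have : (0:ℝ) ≤ ((2:ℝ)^(r+t))⁻¹ := by positivity
      exact mul_le_mul_of_nonneg_right hcb this
    calc ∑ t ∈ Finset.range N, ∑ _l ∈ bad (r+t), ((2:ℝ)^(r+t))⁻¹
        ≤ ∑ _t ∈ Finset.range N, ((2:ℝ)^n₀)⁻¹ := Finset.sum_le_sum hlev
      _ = (N:ℝ) * ((2:ℝ)^n₀)⁻¹ := by
          rw [Finset.sum_const, Finset.card_range, nsmul_eq_mul]
  -- individual slNorm finiteness
  have hfle : ∀ j, slNorm (f j) ≤ 1 := fun j =>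
    le_trans (Finset.single_le_sum (f := fun j => slNorm (f j))
      (fun _ _ => zero_le) (Finset.mem_univ j)) hf
  have hfne : ∀ j, slNorm (f j) ≠ ⊤ := fun j =>
    ne_top_of_le_ne_top (by simp) (hfle j)
  -- f part
  have fpart : ∀ j, ∑ p ∈ P, |f j p.1 p.2| * ((2:ℝ)^p.1)⁻¹
      ≤ (slNorm (f j)).toReal * (Real.sqrt N * ((2:ℝ)^n₀)⁻¹) := by
    intro j
    have hkey := key_avg (f j) n₀ l₀ (r+N) hK₀ (by omega) (hfne j) P hPfull
    have cs := Finset.sum_mul_sq_le_sq_mul_sq P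
      (fun p => |f j p.1 p.2| * Real.sqrt (((2:ℝ)^p.1)⁻¹))
      (fun p => Real.sqrt (((2:ℝ)^p.1)⁻¹))
    have e1 : ∀ p : ℕ × ℕ, (|f j p.1 p.2| * Real.sqrt (((2:ℝ)^p.1)⁻¹))
        * Real.sqrt (((2:ℝ)^p.1)⁻¹) = |f j p.1 p.2| * ((2:ℝ)^p.1)⁻¹ := by
      intro p
      rw [mul_assoc, Real.mul_self_sqrt (by positivity)]
    have e2 : ∀ p : ℕ × ℕ, (|f j p.1 p.2| * Real.sqrt (((2:ℝ)^p.1)⁻¹))^2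
        = (f j p.1 p.2)^2 * ((2:ℝ)^p.1)⁻¹ := by
      intro p
      rw [mul_pow, Real.sq_sqrt (by positivity), sq_abs]
    have e3 : ∀ p : ℕ × ℕ, (Real.sqrt (((2:ℝ)^p.1)⁻¹))^2 = ((2:ℝ)^p.1)⁻¹ := by
      intro p
      rw [Real.sq_sqrt (by positivity)]
    rw [Finset.sum_congr rfl (fun p _ => e1 p), Finset.sum_congr rfl (fun p _ => e2 p),
      Finset.sum_congr rfl (fun p _ => e3 p)] at cs
    -- cs : S^2 ≤ A * W
    set S := ∑ p ∈ P, |f j p.1 p.2| * ((2:ℝ)^p.1)⁻¹ with hS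
    set R := (slNorm (f j)).toReal * (Real.sqrt N * ((2:ℝ)^n₀)⁻¹) with hR
    have hSnn : 0 ≤ S := Finset.sum_nonneg fun p _ => by positivity
    have hRnn : 0 ≤ R := by
      rw [hR]
      have := ENNReal.toReal_nonneg (a := slNorm (f j))
      positivity
    have hA : ∑ p ∈ P, (f j p.1 p.2)^2 * ((2:ℝ)^p.1)⁻¹
        ≤ (slNorm (f j)).toReal^2 * ((2:ℝ)^n₀)⁻¹ := hkey
    have hWnn : 0 ≤ ∑ p ∈ P, ((2:ℝ)^p.1)⁻¹ := Finset.sum_nonneg fun p _ => by positivity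
    have hAnn : 0 ≤ ∑ p ∈ P, (f j p.1 p.2)^2 * ((2:ℝ)^p.1)⁻¹ :=
      Finset.sum_nonneg fun p _ => by positivity
    have hR2 : S^2 ≤ R^2 := by
      have hsqN : Real.sqrt N ^ 2 = (N:ℝ) := Real.sq_sqrt (by positivity)
      have step1 : S^2 ≤ ((slNorm (f j)).toReal^2 * ((2:ℝ)^n₀)⁻¹) * ((N:ℝ) * ((2:ℝ)^n₀)⁻¹) := by
        calc S^2 ≤ _ := cs
          _ ≤ _ := mul_le_mul hA Wb hWnn (by positivity)
      calc S^2 ≤ _ := step1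
        _ = R^2 := by rw [hR]; rw [mul_pow, mul_pow, hsqN]; ring
    nlinarith [hR2, hSnn, hRnn]
  have htoReal : ∑ j, (slNorm (f j)).toReal ≤ 1 := by
    have h1 : (∑ j, slNorm (f j)).toReal ≤ 1 := by
      have := ENNReal.toReal_mono (by simp : (1:ENNReal) ≠ ⊤) hf
      simpa using this
    rwa [ENNReal.toReal_sum (fun j _ => hfne j)] at h1
  have ftotal : ∑ j, ∑ p ∈ P, |f j p.1 p.2| * ((2:ℝ)^p.1)⁻¹
      ≤ Real.sqrt N * ((2:ℝ)^n₀)⁻¹ := by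
    calc ∑ j, ∑ p ∈ P, |f j p.1 p.2| * ((2:ℝ)^p.1)⁻¹
        ≤ ∑ j, (slNorm (f j)).toReal * (Real.sqrt N * ((2:ℝ)^n₀)⁻¹) :=
          Finset.sum_le_sum fun j _ => fpart j
      _ = (∑ j, (slNorm (f j)).toReal) * (Real.sqrt N * ((2:ℝ)^n₀)⁻¹) := by
          rw [← Finset.sum_mul]
      _ ≤ 1 * (Real.sqrt N * ((2:ℝ)^n₀)⁻¹) :=
          mul_le_mul_of_nonneg_right htoReal (by positivity)
      _ = Real.sqrt N * ((2:ℝ)^n₀)⁻¹ := one_mul _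
  -- d part
  have dpart : ∀ j, ∑ p ∈ P, |d j p.1 p.2| ≤ G j * Real.sqrt N := by
    intro j
    set u : ℕ × ℕ → ℝ := fun p => if 0 ≤ d j p.1 p.2 then 1 else -1 with hu
    have hud : ∀ p : ℕ × ℕ, u p * d j p.1 p.2 = |d j p.1 p.2| := by
      intro p
      rw [hu]
      dsimp only
      split
      · rw [one_mul, abs_of_nonneg (by assumption)]
      · rw [abs_of_neg (lt_of_not_ge (by assumption))]; ring
    have habs : ∑ p ∈ P, |d j p.1 p.2| = |∑ p ∈ P, u p * d j p.1 p.2| := by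
      rw [Finset.sum_congr rfl (fun p _ => (hud p).symm)] at *
      rw [abs_of_nonneg (Finset.sum_nonneg fun p _ => by rw [hud p]; positivity)]
    have hb := hg j P hP2 u
    have hsl : slNorm (fun k l => if (k,l) ∈ P then u (k,l) else 0)
        ≤ (N : ENNReal) ^ (1/2 : ℝ) := by
      apply slNorm_le_sqrt _ r N
      · intro k l hkl
        rw [if_neg]
        intro hm
        have := memP (k,l) hm
        simp only at this
        omega
      · intro k l
        split
        · rw [hu]; dsimp only; split <;> norm_num
        · norm_num
    have htR : (slNorm (fun k l => if (k,l) ∈ P then u (k,l) else 0)).toReal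
        ≤ Real.sqrt N := by
      have h1 := ENNReal.toReal_mono
        (ENNReal.rpow_ne_top_of_nonneg (by norm_num) (by simp)) hsl
      rw [← ENNReal.toReal_rpow] at h1
      simp only [ENNReal.toReal_natCast] at h1
      rwa [Real.sqrt_eq_rpow]
    calc ∑ p ∈ P, |d j p.1 p.2| = |∑ p ∈ P, u p * d j p.1 p.2| := habs
      _ ≤ G j * (slNorm (fun k l => if (k,l) ∈ P then u (k,l) else 0)).toReal := hb
      _ ≤ G j * Real.sqrt N := mul_le_mul_of_nonneg_left htR (hGpos j)
  have dtotal : ∑ j, ∑ p ∈ P, |d j p.1 p.2| ≤ ((2:ℝ)^n₀)⁻¹ * Real.sqrt N := by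
    calc ∑ j, ∑ p ∈ P, |d j p.1 p.2| ≤ ∑ j, G j * Real.sqrt N :=
          Finset.sum_le_sum fun j _ => dpart j
      _ = (∑ j, G j) * Real.sqrt N := by rw [← Finset.sum_mul]
      _ ≤ ((2:ℝ)^n₀)⁻¹ * Real.sqrt N :=
          mul_le_mul_of_nonneg_right hG (Real.sqrt_nonneg _)
  -- final contradiction
  have final : (N:ℝ) * (τ * ρ * ((2:ℝ)^n₀)⁻¹)
      < 2 * Real.sqrt N * ((2:ℝ)^n₀)⁻¹ := by
    calc (N:ℝ) * (τ * ρ * ((2:ℝ)^n₀)⁻¹) < _ := lb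
      _ = _ := split
      _ ≤ Real.sqrt N * ((2:ℝ)^n₀)⁻¹ + ((2:ℝ)^n₀)⁻¹ * Real.sqrt N :=
          add_le_add ftotal dtotal
      _ = 2 * Real.sqrt N * ((2:ℝ)^n₀)⁻¹ := by ring
  have hNpos : (0:ℝ) < N := by
    rw [hN]; push_cast; positivity
  have h2n : (0:ℝ) < ((2:ℝ)^n₀)⁻¹ := by positivity
  have h1 : (N:ℝ) * (τ * ρ) < 2 * Real.sqrt N := by
    have h' : ((N:ℝ) * (τ * ρ)) * ((2:ℝ)^n₀)⁻¹ < (2 * Real.sqrt N) * ((2:ℝ)^n₀)⁻¹ := by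
      calc ((N:ℝ) * (τ * ρ)) * ((2:ℝ)^n₀)⁻¹ = (N:ℝ) * (τ * ρ * ((2:ℝ)^n₀)⁻¹) := by ring
        _ < 2 * Real.sqrt N * ((2:ℝ)^n₀)⁻¹ := final
    exact (mul_lt_mul_iff_of_pos_right h2n).mp h'
  have hsqN : Real.sqrt N ^ 2 = (N:ℝ) := Real.sq_sqrt (by positivity)
  have hsqrtpos : 0 < Real.sqrt N := Real.sqrt_pos.mpr hNpos
  have hfinal2 : (N:ℝ) * (τ^2 * ρ^2) < 4 := by
    have hL : 0 ≤ (N:ℝ) * (τ * ρ) := by positivity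
    have hsq2 := mul_lt_mul'' h1 h1 hL hL
    have hmul : (N:ℝ) * ((N:ℝ) * (τ^2 * ρ^2)) < (N:ℝ) * 4 := by nlinarith [hsq2, hsqN]
    exact (mul_lt_mul_iff_right₀ hNpos).mp hmul
  have hlt : (N:ℝ) < 4 / (ρ^2 * τ^2) := by
    rw [lt_div_iff₀ (by positivity)]
    calc (N:ℝ) * (ρ^2 * τ^2) = (N:ℝ) * (τ^2 * ρ^2) := by ring
      _ < 4 := hfinal2
  have : N ≤ F := by
    rw [hF]
    exact Nat.le_floor (le_of_lt hlt)
  omega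
end

section
/- Let 𝒩 be a collection of nested measurable sets of finite positive measure, k ∈ ℕ, and ρ > 0. If 𝒳 ⊆ 𝒩 has Carleson constant ⟦𝒳⟧ > k/ρ, then there exists N₀ ∈ 𝒩 such that for every 0 ≤ ℓ ≤ k, the ℓ-th generation of {N ∈ 𝒳 : N ⊆ N₀} has point-set of measure greater than (1−ρ)|N₀|. -/
open MeasureTheory ENNReal

/-- A collection of sets is nested if any two intersecting members are comparable. -/
def Nested (X : Set (Set ℝ)) : Prop :=
  ∀ M ∈ X, ∀ N ∈ X, (M ∩ N).Nonempty → M ⊆ N ∨ N ⊆ M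

/-- The maximal elements of a collection of sets. -/
def maxEls (X : Set (Set ℝ)) : Set (Set ℝ) :=
  {N | N ∈ X ∧ ∀ M ∈ X, ¬ N ⊂ M}

/-- The `k`-th generation `𝒢_k(𝒳)`: the founding generation `𝒢₀(𝒳)` consists of the maximal
elements, and `𝒢_k(𝒳) = 𝒢₀(𝒳 \ (𝒢₀(𝒳) ∪ ⋯ ∪ 𝒢_{k-1}(𝒳)))`. -/
def gen : ℕ → Set (Set ℝ) → Set (Set ℝ)
  | 0, X => maxEls X
  | (k + 1), X => gen k (X \ maxEls X)

namespace CombTwo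

/-- The members of `X` lying strictly above `M`. -/
def above (X : Set (Set ℝ)) (M : Set ℝ) : Set (Set ℝ) := {L | L ∈ X ∧ M ⊂ L}

/-- A convenient bundle of hypotheses. -/
structure Tame (X : Set (Set ℝ)) : Prop where
  nonemp : ∀ M ∈ X, M.Nonempty
  nst : ∀ M ∈ X, ∀ N ∈ X, (M ∩ N).Nonempty → M ⊆ N ∨ N ⊆ M
  fin : ∀ M ∈ X, (above X M).Finite

theorem Tame.mono {X X' : Set (Set ℝ)} (h : Tame X) (hsub : X' ⊆ X) : Tame X' where
  nonemp M hM := h.nonemp M (hsub hM)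
  nst M hM N hN := h.nst M (hsub hM) N (hsub hN)
  fin M hM := (h.fin M (hsub hM)).subset (fun L hL => ⟨hsub hL.1, hL.2⟩)

theorem Tame.comp {X : Set (Set ℝ)} (hT : Tame X) {M L₁ L₂ : Set ℝ} (hM : M.Nonempty)
    (h1 : L₁ ∈ above X M) (h2 : L₂ ∈ above X M) : L₁ ⊆ L₂ ∨ L₂ ⊆ L₁ :=
  hT.nst L₁ h1.1 L₂ h2.1 ⟨hM.choose, h1.2.subset hM.choose_spec, h2.2.subset hM.choose_spec⟩

theorem exists_top {X : Set (Set ℝ)} (hT : Tame X) {M : Set ℝ} (hM : M ∈ X)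
    (hne : (above X M).Nonempty) :
    ∃ T, T ∈ above X M ∧ above X M ∩ maxEls X = {T} := by
  obtain ⟨T, hTm, hmax⟩ : ∃ T ∈ above X M, ∀ L ∈ above X M, T ⊆ L → T = L := by
    obtain ⟨T, hTm, hmax⟩ := Set.Finite.exists_maximalFor id _ (hT.fin M hM) hne
    exact ⟨T, hTm, fun L hL h => subset_antisymm h (hmax hL h)⟩
  have hub : ∀ L ∈ above X M, L ⊆ T := by
    intro L hL
    rcases hT.comp (hT.nonemp M hM) hL hTm with h | h
    · exact h
    · exact (hmax L hL h).symm.subset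
  have hTmax : T ∈ maxEls X := by
    refine ⟨hTm.1, fun L hL hTL => ?_⟩
    exact hTL.not_subset (hub L ⟨hL, hTm.2.trans hTL⟩)
  refine ⟨T, hTm, Set.eq_singleton_iff_unique_mem.mpr ⟨⟨hTm, hTmax⟩, ?_⟩⟩
  rintro L ⟨hL, hLmax⟩
  by_contra hne'
  exact hLmax.2 T hTm.1 (Set.ssubset_iff_subset_ne.mpr ⟨hub L hL, hne'⟩)

theorem above_sdiff (X Y : Set (Set ℝ)) (M : Set ℝ) :
    above (X \ Y) M = above X M \ Y := by
  ext L; simp only [above, Set.mem_setOf_eq, Set.mem_diff]; tauto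

theorem ncard_above_step {X : Set (Set ℝ)} (hT : Tame X) {M : Set ℝ} (hM : M ∈ X)
    (hne : (above X M).Nonempty) :
    (above X M).ncard = (above (X \ maxEls X) M).ncard + 1 := by
  obtain ⟨T, hTm, hsing⟩ := exists_top hT hM hne
  have hTmax : T ∈ maxEls X := (hsing.symm.subset rfl).2
  have h1 : above (X \ maxEls X) M = above X M \ {T} := by
    rw [above_sdiff]
    ext L
    simp only [Set.mem_diff, Set.mem_singleton_iff]
    constructor
    · rintro ⟨hL, hLm⟩
      exact ⟨hL, fun h => hLm (h ▸ hTmax)⟩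
    · rintro ⟨hL, hLT⟩
      exact ⟨hL, fun h => hLT (hsing.subset ⟨hL, h⟩)⟩
  have h2 : above X M = insert T (above X M \ {T}) := by
    rw [Set.insert_diff_singleton, Set.insert_eq_of_mem hTm]
  rw [h1]
  conv_lhs => rw [h2]
  rw [Set.ncard_insert_of_notMem (a := T) (s := above X M \ {T}) (by simp) ((hT.fin M hM).diff)]
theorem mem_gen_iff : ∀ (ℓ : ℕ) (X : Set (Set ℝ)), Tame X → ∀ M : Set ℝ,
    (M ∈ gen ℓ X ↔ M ∈ X ∧ (above X M).ncard = ℓ) := by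
  intro ℓ
  induction ℓ with
  | zero =>
    intro X hT M
    show M ∈ maxEls X ↔ _
    constructor
    · rintro ⟨hM, hmax⟩
      refine ⟨hM, ?_⟩
      rw [Set.ncard_eq_zero (hT.fin M hM)]
      exact Set.eq_empty_iff_forall_notMem.mpr fun L hL => hmax L hL.1 hL.2
    · rintro ⟨hM, h0⟩
      rw [Set.ncard_eq_zero (hT.fin M hM)] at h0
      refine ⟨hM, fun L hL hML => ?_⟩
      have : L ∈ above X M := ⟨hL, hML⟩
      rw [h0] at this
      exact this
  | succ ℓ IH =>
    intro X hT M
    have hT' : Tame (X \ maxEls X) := hT.mono Set.diff_subset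
    show M ∈ gen ℓ (X \ maxEls X) ↔ _
    rw [IH _ hT']
    constructor
    · rintro ⟨⟨hMX, hMnm⟩, hcard⟩
      have hex : ∃ L ∈ X, M ⊂ L := by
        by_contra hno
        push_neg at hno
        exact hMnm ⟨hMX, hno⟩
      obtain ⟨L, hL, hML⟩ := hex
      have hne : (above X M).Nonempty := ⟨L, hL, hML⟩
      exact ⟨hMX, by rw [ncard_above_step hT hMX hne, hcard]⟩
    · rintro ⟨hMX, hcard⟩
      have hne : (above X M).Nonempty := Set.nonempty_of_ncard_ne_zero (by omega)
      have hMnm : M ∉ maxEls X := by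
        obtain ⟨L, hL⟩ := hne
        exact fun hm => hm.2 L hL.1 hL.2
      refine ⟨⟨hMX, hMnm⟩, ?_⟩
      have := ncard_above_step hT hMX hne
      omega

theorem gen_subset {X : Set (Set ℝ)} (hT : Tame X) (ℓ : ℕ) : gen ℓ X ⊆ X :=
  fun M hM => ((mem_gen_iff ℓ X hT M).1 hM).1

theorem gen_pairwiseDisjoint {X : Set (Set ℝ)} (hT : Tame X) (ℓ : ℕ) :
    (gen ℓ X).Pairwise Disjoint := by
  have key : ∀ A B : Set ℝ, A ∈ X → B ∈ X → (above X A).ncard = ℓ → (above X B).ncard = ℓ →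
      A ⊂ B → False := by
    intro A B hA hB hcA hcB hAB
    have hBnm : B ∉ above X B := fun h => (Set.ssubset_iff_subset_ne.mp h.2).2 rfl
    have hsub : insert B (above X B) ⊆ above X A := by
      rintro L (rfl | hL)
      · exact ⟨hB, hAB⟩
      · exact ⟨hL.1, hAB.trans hL.2⟩
    have hle := Set.ncard_le_ncard hsub (hT.fin A hA)
    rw [Set.ncard_insert_of_notMem hBnm (hT.fin B hB)] at hle
    omega
  intro M hM M' hM' hneq
  rw [mem_gen_iff ℓ X hT] at hM hM'
  by_contra hnd
  rw [Set.not_disjoint_iff_nonempty_inter] at hnd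
  rcases hT.nst M hM.1 M' hM'.1 hnd with h | h
  · exact key M M' hM.1 hM'.1 hM.2 hM'.2 (Set.ssubset_iff_subset_ne.mpr ⟨h, hneq⟩)
  · exact key M' M hM'.1 hM.1 hM'.2 hM.2 (Set.ssubset_iff_subset_ne.mpr ⟨h, hneq.symm⟩)

theorem exists_ancestor {X : Set (Set ℝ)} (hT : Tame X) :
    ∀ (n ℓ : ℕ) (M : Set ℝ), M ∈ X → (above X M).ncard = ℓ + n →
      ∃ M' ∈ X, M ⊆ M' ∧ (above X M').ncard = ℓ := by
  intro n
  induction n with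
  | zero => exact fun ℓ M hM h => ⟨M, hM, subset_rfl, by omega⟩
  | succ n IH =>
    intro ℓ M hM h
    have hne : (above X M).Nonempty := Set.nonempty_of_ncard_ne_zero (by omega)
    obtain ⟨p, hpm, hmin⟩ : ∃ p ∈ above X M, ∀ L ∈ above X M, L ⊆ p → p = L := by
      obtain ⟨p, hpm, hmin⟩ := Set.Finite.exists_minimalFor id _ (hT.fin M hM) hne
      exact ⟨p, hpm, fun L hL h => subset_antisymm (hmin hL h) h⟩
    have hlb : ∀ L ∈ above X M, p ⊆ L := by
      intro L hL
      rcases hT.comp (hT.nonemp M hM) hpm hL with h' | h'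
      · exact h'
      · exact (hmin L hL h').subset
    have hap : above X p = above X M \ {p} := by
      ext L
      simp only [Set.mem_diff, Set.mem_singleton_iff]
      constructor
      · intro hL
        exact ⟨⟨hL.1, hpm.2.trans hL.2⟩, hL.2.ne'⟩
      · rintro ⟨hL, hLp⟩
        exact ⟨hL.1, Set.ssubset_iff_subset_ne.mpr ⟨hlb L hL, Ne.symm hLp⟩⟩
    have hcp : (above X p).ncard = ℓ + n := by
      have h2 : above X M = insert p (above X M \ {p}) := by
        rw [Set.insert_diff_singleton, Set.insert_eq_of_mem hpm]
      have h3 : (above X M).ncard = (above X M \ {p}).ncard + 1 := by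
        conv_lhs => rw [h2]
        rw [Set.ncard_insert_of_notMem (a := p) (s := above X M \ {p}) (by simp)
          ((hT.fin M hM).diff)]
      rw [hap]
      omega
    obtain ⟨M', hM', hpM', hcard⟩ := IH ℓ p hpm.1 hcp
    exact ⟨M', hM', hpm.2.subset.trans hpM', hcard⟩
/-- The members of `𝒳` contained in `N`. -/
def ydef (𝒳 : Set (Set ℝ)) (N : Set ℝ) : Set (Set ℝ) := {M | M ∈ 𝒳 ∧ M ⊆ N}

theorem above_ydef_split {𝒳 : Set (Set ℝ)} (hnst : Nested 𝒳) {M M' N' : Set ℝ}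
    (hMne : M.Nonempty) (hM' : M' ∈ 𝒳) (h2 : M' ⊆ N') (h1 : M ⊆ M') :
    above (ydef 𝒳 N') M = above (ydef 𝒳 M') M ∪ above (ydef 𝒳 N') M' := by
  ext L
  constructor
  · rintro ⟨⟨hLX, hLN⟩, hML⟩
    by_cases he : L ⊆ M'
    · exact Or.inl ⟨⟨hLX, he⟩, hML⟩
    · rcases hnst L hLX M' hM'
        ⟨hMne.choose, hML.subset hMne.choose_spec, h1 hMne.choose_spec⟩ with h | h
      · exact absurd h he
      · refine Or.inr ⟨⟨hLX, hLN⟩, ?_⟩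
        rw [Set.ssubset_def]
        exact ⟨h, he⟩
  · rintro (⟨⟨hLX, hLM'⟩, hML⟩ | ⟨⟨hLX, hLN⟩, hML⟩)
    · exact ⟨⟨hLX, hLM'.trans h2⟩, hML⟩
    · exact ⟨⟨hLX, hLN⟩, ssubset_of_subset_of_ssubset h1 hML⟩

theorem ydef_disj {𝒳 : Set (Set ℝ)} {M M' N' : Set ℝ} :
    Disjoint (above (ydef 𝒳 M') M) (above (ydef 𝒳 N') M') := by
  rw [Set.disjoint_left]
  rintro L ⟨⟨_, hLM'⟩, _⟩ ⟨_, hM'L⟩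
  exact hM'L.not_subset hLM'

theorem dep_add {𝒳 : Set (Set ℝ)} (hnst : Nested 𝒳) {M M' N' : Set ℝ}
    (hMne : M.Nonempty) (hM' : M' ∈ 𝒳) (h2 : M' ⊆ N') (h1 : M ⊆ M')
    (hfin : (above (ydef 𝒳 N') M).Finite) :
    (above (ydef 𝒳 N') M).ncard
      = (above (ydef 𝒳 M') M).ncard + (above (ydef 𝒳 N') M').ncard := by
  have hsplit := above_ydef_split hnst hMne hM' h2 h1
  have hAB : (above (ydef 𝒳 M') M ∪ above (ydef 𝒳 N') M').Finite := hsplit ▸ hfin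
  rw [hsplit, Set.ncard_union_eq ydef_disj (hAB.subset Set.subset_union_left)
    (hAB.subset Set.subset_union_right)]
/-- Sum of volumes of members of a collection. -/
noncomputable def Sig (S : Set (Set ℝ)) : ℝ≥0∞ := ∑' M : S, volume (M : Set ℝ)

/-- Members of `ydef 𝒳 N'` of generation `< d`. -/
def blk (𝒳 : Set (Set ℝ)) (N' : Set ℝ) (d : ℕ) : Set (Set ℝ) :=
  {M | M ∈ ydef 𝒳 N' ∧ (above (ydef 𝒳 N') M).ncard < d}

/-- The partial Carleson sum over the first `d` generations below `N'`. -/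
noncomputable def TT (𝒳 : Set (Set ℝ)) (N' : Set ℝ) (d : ℕ) : ℝ≥0∞ := Sig (blk 𝒳 N' d)

end CombTwo

open CombTwo

/-- Lemma `lem:comb-2`: if `𝒳 ⊆ 𝒩` has Carleson constant `> k/ρ`, then there exists
`N₀ ∈ 𝒩` such that for every `0 ≤ ℓ ≤ k`, the point-set of the `ℓ`-th generation of
`{N ∈ 𝒳 : N ⊆ N₀}` has measure greater than `(1-ρ)|N₀|`.
(The hypothesis `hwf` asserts that above each member of `𝒳` there are only finitely many
members, so that every member lies in some generation, as is implicit for nested collections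
of dyadic type; `0 < ρ < 1` as in the proof.) -/
theorem comb_lemma_two (𝒩 : Set (Set ℝ)) (hnested : Nested 𝒩)
    (hmeas : ∀ N ∈ 𝒩, MeasurableSet N ∧ 0 < volume N ∧ volume N < ⊤)
    (𝒳 : Set (Set ℝ)) (h𝒳 : 𝒳 ⊆ 𝒩)
    (hwf : ∀ N ∈ 𝒳, {M | M ∈ 𝒳 ∧ N ⊆ M}.Finite)
    (k : ℕ) (hk : 1 ≤ k) (ρ : ℝ) (hρ0 : 0 < ρ) (hρ1 : ρ < 1)
    (hcarleson : ∃ N ∈ 𝒳, ENNReal.ofReal ((k : ℝ) / ρ) * volume N <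
      ∑' M : {M : Set ℝ // M ∈ 𝒳 ∧ M ⊆ N}, volume (M : Set ℝ)) :
    ∃ N₀ ∈ 𝒩, ∀ ℓ ≤ k,
      ENNReal.ofReal (1 - ρ) * volume N₀ <
        volume (⋃₀ gen ℓ {N | N ∈ 𝒳 ∧ N ⊆ N₀}) := by
  by_contra hcon
  push_neg at hcon
  obtain ⟨N, hN, hlt⟩ := hcarleson
  have hnst : Nested 𝒳 := fun A hA B hB h => hnested A (h𝒳 hA) B (h𝒳 hB) h
  have hne𝒳 : ∀ M ∈ 𝒳, M.Nonempty := by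
    intro M hM
    have hpos := (hmeas M (h𝒳 hM)).2.1
    rw [Set.nonempty_iff_ne_empty]
    rintro rfl
    simp at hpos
  have hTame : ∀ N' ∈ 𝒳, Tame (ydef 𝒳 N') := by
    intro N' hN'
    refine ⟨fun M hM => hne𝒳 M hM.1,
      fun A hA B hB hAB => hnst A hA.1 B hB.1 hAB, fun M hM => ?_⟩
    exact (hwf M hM.1).subset (fun L hL => ⟨hL.1.1, hL.2.subset⟩)
  -- measure of the point-set of a generation
  have hGen : ∀ N' ∈ 𝒳, ∀ j : ℕ,
      Sig (gen j (ydef 𝒳 N')) = volume (⋃₀ gen j (ydef 𝒳 N')) := by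
    intro N' hN' j
    have hT := hTame N' hN'
    have hsub : gen j (ydef 𝒳 N') ⊆ 𝒳 := fun M hM => (gen_subset hT j hM).1
    have hpd := gen_pairwiseDisjoint hT j
    have hmble : ∀ s ∈ gen j (ydef 𝒳 N'), MeasurableSet s :=
      fun s hs => (hmeas s (h𝒳 (hsub hs))).1
    have hcnt : (gen j (ydef 𝒳 N')).Countable := by
      have hps : Pairwise (Function.onFun Disjoint fun i : (gen j (ydef 𝒳 N')) => (i : Set ℝ)) :=
        fun a b hab => hpd a.2 b.2 (Subtype.coe_ne_coe.mpr hab)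
      have hcm := MeasureTheory.Measure.countable_meas_pos_of_disjoint_iUnion
        (μ := volume) (fun i : (gen j (ydef 𝒳 N')) => hmble i i.2) hps
      have huniv : {i : (gen j (ydef 𝒳 N')) | 0 < volume (i : Set ℝ)} = Set.univ := by
        ext i
        simp [(hmeas i (h𝒳 (hsub i.2))).2.1]
      rw [huniv, Set.countable_univ_iff] at hcm
      exact Set.countable_coe_iff.mp hcm
    exact (measure_sUnion hcnt hpd hmble).symm
  have hGle : ∀ N' ∈ 𝒳, ∀ j : ℕ, volume (⋃₀ gen j (ydef 𝒳 N')) ≤ volume N' := by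
    intro N' hN' j
    apply measure_mono
    rintro x ⟨s, hs, hxs⟩
    exact (gen_subset (hTame N' hN') j hs).2 hxs
  -- decomposition of partial sums into generations
  have hstep : ∀ N' ∈ 𝒳, ∀ d : ℕ,
      TT 𝒳 N' (d + 1) = TT 𝒳 N' d + Sig (gen d (ydef 𝒳 N')) := by
    intro N' hN' d
    have hT := hTame N' hN'
    have hsplit : blk 𝒳 N' (d + 1) = blk 𝒳 N' d ∪ gen d (ydef 𝒳 N') := by
      ext M
      simp only [blk, Set.mem_setOf_eq, Set.mem_union, mem_gen_iff d _ hT]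
      constructor
      · rintro ⟨h1, h2⟩
        rcases Nat.lt_or_ge (above (ydef 𝒳 N') M).ncard d with h | h
        · exact Or.inl ⟨h1, h⟩
        · exact Or.inr ⟨h1, by omega⟩
      · rintro (⟨h1, h2⟩ | ⟨h1, h2⟩)
        · exact ⟨h1, by omega⟩
        · exact ⟨h1, by omega⟩
    have hdisj : Disjoint (blk 𝒳 N' d) (gen d (ydef 𝒳 N')) := by
      rw [Set.disjoint_left]
      intro M hM hMg
      rw [mem_gen_iff d _ hT] at hMg
      exact absurd hMg.2 (Nat.ne_of_lt hM.2)
    show Sig (blk 𝒳 N' (d+1)) = Sig (blk 𝒳 N' d) + Sig (gen d (ydef 𝒳 N'))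
    unfold Sig
    rw [hsplit, Summable.tsum_union_disjoint hdisj ENNReal.summable ENNReal.summable]
  have hTsum : ∀ N' ∈ 𝒳, ∀ d : ℕ,
      TT 𝒳 N' d = ∑ j ∈ Finset.range d, Sig (gen j (ydef 𝒳 N')) := by
    intro N' hN' d
    induction d with
    | zero =>
      have hempty : blk 𝒳 N' 0 = ∅ := by
        ext M; simp [blk]
      show Sig (blk 𝒳 N' 0) = _
      rw [hempty]
      simp [Sig, tsum_empty]
    | succ d IH =>
      rw [hstep N' hN' d, IH, Finset.sum_range_succ]
  have hTle : ∀ N' ∈ 𝒳, ∀ d : ℕ, TT 𝒳 N' d ≤ (d : ℝ≥0∞) * volume N' := by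
    intro N' hN' d
    rw [hTsum N' hN' d]
    calc ∑ j ∈ Finset.range d, Sig (gen j (ydef 𝒳 N'))
        ≤ ∑ _j ∈ Finset.range d, volume N' :=
          Finset.sum_le_sum fun j _ => le_trans (le_of_eq (hGen N' hN' j)) (hGle N' hN' j)
      _ = (d : ℝ≥0∞) * volume N' := by
          rw [Finset.sum_const, Finset.card_range, nsmul_eq_mul]
  -- every member of 𝒳 has some generation 1 ≤ ℓ ≤ k with small point-set
  have hsel : ∀ N' ∈ 𝒳, ∃ ℓ, 1 ≤ ℓ ∧ ℓ ≤ k ∧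
      volume (⋃₀ gen ℓ (ydef 𝒳 N')) ≤ ENNReal.ofReal (1 - ρ) * volume N' := by
    intro N' hN'
    obtain ⟨ℓ, hℓk, hle⟩ := hcon N' (h𝒳 hN')
    refine ⟨ℓ, ?_, hℓk, hle⟩
    by_contra h1
    have hℓ0 : ℓ = 0 := by omega
    subst hℓ0
    have hT := hTame N' hN'
    have hNy : N' ∈ ydef 𝒳 N' := ⟨hN', subset_rfl⟩
    have hNg : N' ∈ gen 0 (ydef 𝒳 N') := by
      rw [mem_gen_iff 0 _ hT]
      refine ⟨hNy, ?_⟩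
      rw [Set.ncard_eq_zero (hT.fin N' hNy)]
      exact Set.eq_empty_iff_forall_notMem.mpr fun L hL => hL.2.not_subset hL.1.2
    have hvle : volume N' ≤ volume (⋃₀ gen 0 (ydef 𝒳 N')) :=
      measure_mono (Set.subset_sUnion_of_mem hNg)
    have hpos := (hmeas N' (h𝒳 hN')).2.1
    have hfin := (hmeas N' (h𝒳 hN')).2.2
    have hlt1 : ENNReal.ofReal (1 - ρ) * volume N' < 1 * volume N' := by
      refine (ENNReal.mul_lt_mul_iff_left hpos.ne' hfin.ne).mpr ?_
      exact ENNReal.ofReal_lt_one.mpr (by linarith)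
    rw [one_mul] at hlt1
    exact absurd (lt_of_le_of_lt (hvle.trans hle) hlt1) (lt_irrefl _)
    -- the key estimate, by strong induction on the number of generations
  have key : ∀ d : ℕ, ∀ N' ∈ 𝒳, TT 𝒳 N' d ≤ ENNReal.ofReal ((k : ℝ) / ρ) * volume N' := by
    intro d
    induction d using Nat.strong_induction_on with
    | _ d IH =>
    intro N' hN'
    obtain ⟨ℓ, hℓ1, hℓk, hG⟩ := hsel N' hN'
    have hkρ : (k : ℝ) ≤ (k : ℝ) / ρ := by
      rw [le_div_iff₀ hρ0]
      nlinarith [Nat.cast_nonneg (α := ℝ) k]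
    by_cases hdl : d ≤ ℓ
    · refine (hTle N' hN' d).trans ?_
      apply mul_le_mul_left
      calc (d : ℝ≥0∞) = ENNReal.ofReal d := (ENNReal.ofReal_natCast d).symm
        _ ≤ ENNReal.ofReal ((k : ℝ) / ρ) := by
            apply ENNReal.ofReal_le_ofReal
            have hdk : (d : ℝ) ≤ (k : ℝ) := by exact_mod_cast le_trans hdl hℓk
            linarith
    · push_neg at hdl
      have hT := hTame N' hN'
      have hsplit : blk 𝒳 N' d = blk 𝒳 N' ℓ ∪
          {M | M ∈ ydef 𝒳 N' ∧ ℓ ≤ (above (ydef 𝒳 N') M).ncard ∧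
            (above (ydef 𝒳 N') M).ncard < d} := by
        ext M
        simp only [blk, Set.mem_setOf_eq, Set.mem_union]
        constructor
        · rintro ⟨h1, h2⟩
          rcases Nat.lt_or_ge (above (ydef 𝒳 N') M).ncard ℓ with h | h
          · exact Or.inl ⟨h1, h⟩
          · exact Or.inr ⟨h1, h, h2⟩
        · rintro (⟨h1, h2⟩ | ⟨h1, h2, h3⟩)
          · exact ⟨h1, by omega⟩
          · exact ⟨h1, h3⟩
      have hdisj : Disjoint (blk 𝒳 N' ℓ)
          {M | M ∈ ydef 𝒳 N' ∧ ℓ ≤ (above (ydef 𝒳 N') M).ncard ∧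
            (above (ydef 𝒳 N') M).ncard < d} := by
        rw [Set.disjoint_left]
        rintro M hM ⟨_, h2, _⟩
        exact absurd hM.2 (by omega)
      have hB : {M | M ∈ ydef 𝒳 N' ∧ ℓ ≤ (above (ydef 𝒳 N') M).ncard ∧
            (above (ydef 𝒳 N') M).ncard < d}
          = ⋃ M' ∈ gen ℓ (ydef 𝒳 N'), blk 𝒳 M' (d - ℓ) := by
        ext M
        simp only [Set.mem_setOf_eq, Set.mem_iUnion, exists_prop]
        constructor
        · rintro ⟨hM, hge, hltd⟩
          obtain ⟨M', hM'y, hMM', hcard⟩ := exists_ancestor hT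
            ((above (ydef 𝒳 N') M).ncard - ℓ) ℓ M hM (by omega)
          have hM'g : M' ∈ gen ℓ (ydef 𝒳 N') := (mem_gen_iff ℓ _ hT M').2 ⟨hM'y, hcard⟩
          have hadd := dep_add hnst (hne𝒳 M hM.1) hM'y.1 hM'y.2 hMM' (hT.fin M hM)
          refine ⟨M', hM'g, ⟨hM.1, hMM'⟩, ?_⟩
          omega
        · rintro ⟨M', hM'g, hMy, hMlt⟩
          have hM'y : M' ∈ ydef 𝒳 N' := gen_subset hT ℓ hM'g
          have hcard := ((mem_gen_iff ℓ _ hT M').1 hM'g).2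
          have hMyN : M ∈ ydef 𝒳 N' := ⟨hMy.1, hMy.2.trans hM'y.2⟩
          have hadd := dep_add hnst (hne𝒳 M hMy.1) hM'y.1 hM'y.2 hMy.2 (hT.fin M hMyN)
          exact ⟨hMyN, by omega⟩
      have hblkeq : TT 𝒳 N' d = TT 𝒳 N' ℓ +
          Sig {M | M ∈ ydef 𝒳 N' ∧ ℓ ≤ (above (ydef 𝒳 N') M).ncard ∧
            (above (ydef 𝒳 N') M).ncard < d} := by
        show Sig (blk 𝒳 N' d) = Sig (blk 𝒳 N' ℓ) + _
        unfold Sig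
        rw [hsplit, Summable.tsum_union_disjoint hdisj ENNReal.summable ENNReal.summable]
      have hSigB : Sig {M | M ∈ ydef 𝒳 N' ∧ ℓ ≤ (above (ydef 𝒳 N') M).ncard ∧
            (above (ydef 𝒳 N') M).ncard < d}
          ≤ ∑' M' : gen ℓ (ydef 𝒳 N'), Sig (blk 𝒳 (M' : Set ℝ) (d - ℓ)) := by
        unfold Sig
        rw [hB]
        exact tsum_biUnion_le_tsum volume (gen ℓ (ydef 𝒳 N')) (fun M' => blk 𝒳 M' (d - ℓ))
      have hIH : ∑' M' : gen ℓ (ydef 𝒳 N'), Sig (blk 𝒳 (M' : Set ℝ) (d - ℓ))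
          ≤ ENNReal.ofReal ((k : ℝ) / ρ) * Sig (gen ℓ (ydef 𝒳 N')) := by
        unfold Sig
        rw [← ENNReal.tsum_mul_left]
        refine ENNReal.tsum_le_tsum fun M' => ?_
        exact IH (d - ℓ) (by omega) (M' : Set ℝ) (gen_subset hT ℓ M'.2).1
      have hGl : Sig (gen ℓ (ydef 𝒳 N')) ≤ ENNReal.ofReal (1 - ρ) * volume N' := by
        rw [hGen N' hN' ℓ]
        exact hG
      have hcoef : (ℓ : ℝ≥0∞) * volume N'
            + ENNReal.ofReal ((k : ℝ) / ρ) * (ENNReal.ofReal (1 - ρ) * volume N')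
          ≤ ENNReal.ofReal ((k : ℝ) / ρ) * volume N' := by
        rw [← mul_assoc, ← add_mul]
        apply mul_le_mul_left
        have e1 : (ℓ : ℝ≥0∞) = ENNReal.ofReal ℓ := (ENNReal.ofReal_natCast ℓ).symm
        have e2 : ENNReal.ofReal ((k : ℝ) / ρ) * ENNReal.ofReal (1 - ρ)
            = ENNReal.ofReal ((k : ℝ) / ρ * (1 - ρ)) :=
          (ENNReal.ofReal_mul (by positivity)).symm
        rw [e1, e2, ← ENNReal.ofReal_add (by positivity)
          (mul_nonneg (div_nonneg (Nat.cast_nonneg k) hρ0.le) (by linarith))]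
        apply ENNReal.ofReal_le_ofReal
        have hkk : (k : ℝ) / ρ * (1 - ρ) = (k : ℝ) / ρ - k := by
          field_simp
        have hlk : (ℓ : ℝ) ≤ (k : ℝ) := by exact_mod_cast hℓk
        rw [hkk]
        linarith
      calc TT 𝒳 N' d = TT 𝒳 N' ℓ + Sig _ := hblkeq
        _ ≤ (ℓ : ℝ≥0∞) * volume N'
            + ENNReal.ofReal ((k : ℝ) / ρ) * (ENNReal.ofReal (1 - ρ) * volume N') := by
            refine add_le_add (hTle N' hN' ℓ) ?_
            refine (hSigB.trans hIH).trans ?_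
            exact mul_le_mul_right hGl _
        _ ≤ ENNReal.ofReal ((k : ℝ) / ρ) * volume N' := hcoef
  -- conclusion
  have hYsub : {M : Set ℝ | M ∈ 𝒳 ∧ M ⊆ N} = ⋃ j : ℕ, gen j (ydef 𝒳 N) := by
    ext M
    simp only [Set.mem_iUnion, Set.mem_setOf_eq]
    constructor
    · intro hM
      exact ⟨(above (ydef 𝒳 N) M).ncard, (mem_gen_iff _ _ (hTame N hN) M).2 ⟨hM, rfl⟩⟩
    · rintro ⟨j, hj⟩
      exact gen_subset (hTame N hN) j hj
  have hfinal : (∑' M : {M : Set ℝ // M ∈ 𝒳 ∧ M ⊆ N}, volume (M : Set ℝ))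
      ≤ ENNReal.ofReal ((k : ℝ) / ρ) * volume N := by
    calc (∑' M : {M : Set ℝ // M ∈ 𝒳 ∧ M ⊆ N}, volume (M : Set ℝ))
        = Sig (⋃ j : ℕ, gen j (ydef 𝒳 N)) := by
          rw [← hYsub]; rfl
      _ ≤ ∑' j : ℕ, Sig (gen j (ydef 𝒳 N)) := by
          unfold Sig
          exact tsum_iUnion_le_tsum volume _
      _ = ⨆ d : ℕ, ∑ j ∈ Finset.range d, Sig (gen j (ydef 𝒳 N)) := ENNReal.tsum_eq_iSup_nat
      _ = ⨆ d : ℕ, TT 𝒳 N d := by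
          exact iSup_congr fun d => (hTsum N hN d).symm
      _ ≤ ENNReal.ofReal ((k : ℝ) / ρ) * volume N := iSup_le fun d => key d N hN
  exact absurd hlt (not_lt.mpr hfinal)
end

section
/- Let n ∈ ℕ₀ and α, β ∈ ℝ with 0 < β < 1 and 0 < α < 2^{−n−1} β^{n+1}. Let 𝒳 be a collection of measurable nested sets of finite positive measure with |G_n(𝒳)| > (1−α)|G₀(𝒳)|. Then there exists a subcollection 𝒴 ⊆ 𝒳 such that |G_n(𝒴)| > (1 − α·2^{n+1}/β^{n+1}) |G₀(𝒳)| and |N ∩ G_n(𝒴)| ≥ (1−β)|N| for every N ∈ 𝒴. -/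
open MeasureTheory

namespace CombAux

def chainF (X : Set (Set ℝ)) : ℕ → Set (Set ℝ)
  | 0 => X
  | k+1 => chainF X k \ maxEls (chainF X k)

lemma chainF_shift (X : Set (Set ℝ)) : ∀ k, chainF (X \ maxEls X) k = chainF X (k+1)
  | 0 => rfl
  | k+1 => by rw [chainF, chainF_shift X k]; rfl

lemma gen_eq : ∀ (k : ℕ) (X : Set (Set ℝ)), gen k X = maxEls (chainF X k)
  | 0, X => rfl
  | k+1, X => by
      show gen k (X \ maxEls X) = _
      rw [gen_eq k, chainF_shift]

lemma maxEls_subset (X : Set (Set ℝ)) : maxEls X ⊆ X := fun _ h => h.1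

lemma chainF_subset (X : Set (Set ℝ)) : ∀ k, chainF X k ⊆ X
  | 0 => subset_rfl
  | k+1 => fun N hN => chainF_subset X k hN.1

lemma chainF_antitone (X : Set (Set ℝ)) {k j : ℕ} (h : k ≤ j) : chainF X j ⊆ chainF X k := by
  induction j with
  | zero => simp_all
  | succ j ih =>
    rcases Nat.eq_or_lt_of_le h with rfl | h'
    · exact subset_rfl
    · exact fun N hN => ih (Nat.lt_succ_iff.mp h') hN.1

lemma gen_subset (k : ℕ) (X : Set (Set ℝ)) : gen k X ⊆ X := by
  rw [gen_eq]; exact fun N hN => chainF_subset X k hN.1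

lemma level_lt {X : Set (Set ℝ)} {k j : ℕ} {M N : Set ℝ}
    (hN : N ∈ gen k X) (hM : M ∈ gen j X) (h : N ⊂ M) : j < k := by
  by_contra h'
  push_neg at h'
  rw [gen_eq] at hN hM
  exact hN.2 M (chainF_antitone X h' hM.1) h

lemma gen_levels_disjoint {X : Set (Set ℝ)} {k j : ℕ} {N : Set ℝ}
    (hj : j < k) (hNj : N ∈ gen j X) (hNk : N ∈ gen k X) : False := by
  rw [gen_eq] at hNj hNk
  have h1 : N ∈ chainF X (j+1) := chainF_antitone X hj hNk.1
  exact h1.2 hNj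

lemma exists_parent {X : Set (Set ℝ)} {k : ℕ} {N : Set ℝ} (hN : N ∈ gen (k+1) X) :
    ∃ M, M ∈ gen k X ∧ N ⊂ M := by
  by_contra h
  push_neg at h
  rw [gen_eq] at hN
  obtain ⟨⟨hNk, hNm⟩, hmax⟩ := hN
  have hex : ∃ M', M' ∈ chainF X k ∧ N ⊂ M' := by
    by_contra h2
    push_neg at h2
    exact hNm ⟨hNk, fun M hM => h2 M hM⟩
  obtain ⟨M', hM', hlt⟩ := hex
  have hM'' : M' ∈ chainF X (k+1) := by
    refine ⟨hM', fun hmx => ?_⟩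
    exact h M' (by rw [gen_eq]; exact hmx) hlt
  exact hmax M' hM'' hlt

lemma exists_ancestor {X : Set (Set ℝ)} :
    ∀ (d k : ℕ) (N : Set ℝ), N ∈ gen (k + d) X → ∃ M, M ∈ gen k X ∧ N ⊆ M := by
  intro d
  induction d with
  | zero => exact fun k N hN => ⟨N, hN, subset_rfl⟩
  | succ d ih =>
    intro k N hN
    have : N ∈ gen ((k + d) + 1) X := by rwa [show k + (d+1) = (k+d)+1 from rfl] at hN
    obtain ⟨M₁, hM₁, hlt⟩ := exists_parent this
    obtain ⟨M, hM, hsub⟩ := ih k M₁ hM₁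
    exact ⟨M, hM, hlt.subset.trans hsub⟩

lemma exists_root {X : Set (Set ℝ)} {k : ℕ} {N : Set ℝ} (hN : N ∈ gen k X) :
    ∃ M, M ∈ maxEls X ∧ N ⊆ M :=
  exists_ancestor k 0 N (by simpa using hN)

lemma gen_disjoint {X : Set (Set ℝ)} (hnested : Nested X) {k : ℕ} {M N : Set ℝ}
    (hM : M ∈ gen k X) (hN : N ∈ gen k X) (hne : M ≠ N) : Disjoint M N := by
  rw [Set.disjoint_iff_inter_eq_empty]
  by_contra h
  have hinter : (M ∩ N).Nonempty := Set.nonempty_iff_ne_empty.mpr h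
  rcases hnested M (gen_subset k X hM) N (gen_subset k X hN) hinter with hs | hs
  · exact absurd (level_lt hM hN (ssubset_of_subset_of_ne hs hne)) (lt_irrefl k)
  · exact absurd (level_lt hN hM (ssubset_of_subset_of_ne hs hne.symm)) (lt_irrefl k)

lemma maxEls_graded (X : Set (Set ℝ)) (l : ℕ) (Y : Set (Set ℝ))
    (hgrade : ∀ N ∈ Y, ∃ k, l ≤ k ∧ N ∈ gen k X)
    (hpar : ∀ k N, N ∈ Y → N ∈ gen (k+1) X → l ≤ k → ∃ M, M ∈ Y ∧ M ∈ gen k X ∧ N ⊂ M) :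
    maxEls Y = {N | N ∈ Y ∧ N ∈ gen l X} := by
  ext N
  simp only [maxEls, Set.mem_setOf_eq]
  constructor
  · rintro ⟨hNY, hmax⟩
    refine ⟨hNY, ?_⟩
    obtain ⟨k, hlk, hNk⟩ := hgrade N hNY
    rcases Nat.eq_or_lt_of_le hlk with rfl | hlt
    · exact hNk
    · obtain ⟨k', rfl⟩ := Nat.exists_eq_add_of_lt hlt
      have hk : N ∈ gen ((l + k') + 1) X := hNk
      obtain ⟨M, hMY, _, hss⟩ := hpar (l + k') N hNY hk (Nat.le_add_right l k')
      exact absurd hss (hmax M hMY)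
  · rintro ⟨hNY, hNl⟩
    refine ⟨hNY, fun M hMY hss => ?_⟩
    obtain ⟨k', hlk', hMk'⟩ := hgrade M hMY
    exact absurd (level_lt hNl hMk' hss) (Nat.not_lt.mpr hlk')

lemma gen_of_graded (X : Set (Set ℝ)) :
    ∀ (m l : ℕ) (Y : Set (Set ℝ)),
    (∀ N ∈ Y, ∃ k, l ≤ k ∧ N ∈ gen k X) →
    (∀ k N, N ∈ Y → N ∈ gen (k+1) X → l ≤ k → ∃ M, M ∈ Y ∧ M ∈ gen k X ∧ N ⊂ M) →
    gen m Y = {N | N ∈ Y ∧ N ∈ gen (l + m) X} := by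
  intro m
  induction m with
  | zero =>
    intro l Y hgrade hpar
    rw [show gen 0 Y = maxEls Y from rfl, maxEls_graded X l Y hgrade hpar, Nat.add_zero]
  | succ m ih =>
    intro l Y hgrade hpar
    have hbase := maxEls_graded X l Y hgrade hpar
    show gen m (Y \ maxEls Y) = _
    have hY' : Y \ maxEls Y = {N | N ∈ Y ∧ N ∉ gen l X} := by
      rw [hbase]; ext N; simp only [Set.mem_diff, Set.mem_setOf_eq]; tauto
    rw [hY']
    have hgrade' : ∀ N ∈ {N | N ∈ Y ∧ N ∉ gen l X}, ∃ k, l + 1 ≤ k ∧ N ∈ gen k X := by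
      rintro N ⟨hNY, hNl⟩
      obtain ⟨k, hlk, hNk⟩ := hgrade N hNY
      refine ⟨k, ?_, hNk⟩
      rcases Nat.eq_or_lt_of_le hlk with rfl | hlt
      · exact absurd hNk hNl
      · exact hlt
    have hpar' : ∀ k N, N ∈ {N | N ∈ Y ∧ N ∉ gen l X} → N ∈ gen (k+1) X → l + 1 ≤ k →
        ∃ M, M ∈ {N | N ∈ Y ∧ N ∉ gen l X} ∧ M ∈ gen k X ∧ N ⊂ M := by
      rintro k N ⟨hNY, _⟩ hNk hlk
      obtain ⟨M, hMY, hMk, hss⟩ := hpar k N hNY hNk (Nat.le_of_succ_le hlk)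
      refine ⟨M, ⟨hMY, fun hMl => ?_⟩, hMk, hss⟩
      exact gen_levels_disjoint (Nat.lt_of_succ_le hlk) hMl hMk
    have := ih (l + 1) {N | N ∈ Y ∧ N ∉ gen l X} hgrade' hpar'
    rw [this]
    ext N
    simp only [Set.mem_setOf_eq]
    constructor
    · rintro ⟨⟨h1, _⟩, h3⟩
      exact ⟨h1, by rwa [show l + 1 + m = l + (m+1) by omega] at h3⟩
    · rintro ⟨h1, h2⟩
      have h2' : N ∈ gen (l + 1 + m) X := by rwa [show l + 1 + m = l + (m+1) by omega]
      refine ⟨⟨h1, fun hl => ?_⟩, h2'⟩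
      exact gen_levels_disjoint (by omega) hl h2'


variable (𝒳 : Set (Set ℝ)) (n : ℕ) (β : ℝ)

/-- pruned descendant set, `j` levels down from generation `n - j`. -/
def Dset : ℕ → Set ℝ → Set ℝ
  | 0, N => N
  | j+1, N => ⋃₀ (Dset j '' {M | M ∈ gen (n-j) 𝒳 ∧ M ⊆ N ∧
      ENNReal.ofReal (1-β) * volume M ≤ volume (Dset j M)})

def keepP (j : ℕ) (M : Set ℝ) : Prop :=
  ENNReal.ofReal (1-β) * volume M ≤ volume (Dset 𝒳 n β j M)

lemma Dset_succ (j : ℕ) (N : Set ℝ) :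
    Dset 𝒳 n β (j+1) N =
      ⋃ M ∈ {M | M ∈ gen (n-j) 𝒳 ∧ M ⊆ N ∧ keepP 𝒳 n β j M}, Dset 𝒳 n β j M := by
  rw [show Dset 𝒳 n β (j+1) N = ⋃₀ (Dset 𝒳 n β j '' {M | M ∈ gen (n-j) 𝒳 ∧ M ⊆ N ∧
      ENNReal.ofReal (1-β) * volume M ≤ volume (Dset 𝒳 n β j M)}) from rfl,
    Set.sUnion_image]
  rfl

lemma Dset_subset : ∀ (j : ℕ) (N : Set ℝ), Dset 𝒳 n β j N ⊆ N := by
  intro j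
  induction j with
  | zero => exact fun N => subset_rfl
  | succ j ih =>
    intro N x hx
    rw [Dset_succ] at hx
    simp only [Set.mem_iUnion] at hx
    obtain ⟨M, hM, hxM⟩ := hx
    exact hM.2.1 (ih M hxM)

variable (hnested : Nested 𝒳)
    (hmeas : ∀ N ∈ 𝒳, MeasurableSet N ∧ 0 < volume N ∧ volume N < ⊤)

include hnested hmeas in
lemma gen_countable (k : ℕ) : (gen k 𝒳).Countable := by
  have h := MeasureTheory.Measure.countable_meas_pos_of_disjoint_iUnion
    (μ := volume) (ι := ↥(gen k 𝒳)) (As := fun M => (M : Set ℝ))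
    (fun M => (hmeas M (gen_subset k 𝒳 M.2)).1)
    (fun M M' hne => gen_disjoint hnested M.2 M'.2 (fun h => hne (Subtype.ext h)))
  have huniv : {i : ↥(gen k 𝒳) | 0 < volume (i : Set ℝ)} = Set.univ := by
    ext M
    simp [(hmeas M (gen_subset k 𝒳 M.2)).2.1]
  rw [huniv] at h
  have : Countable ↥(gen k 𝒳) := Set.countable_univ_iff.mp h
  exact Set.countable_coe_iff.mp this

include hnested hmeas in
lemma Dset_measurable : ∀ (j : ℕ) (N : Set ℝ), N ∈ 𝒳 → MeasurableSet (Dset 𝒳 n β j N) := by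
  intro j
  induction j with
  | zero => exact fun N hN => (hmeas N hN).1
  | succ j ih =>
    intro N hN
    rw [Dset_succ]
    refine MeasurableSet.biUnion ?_ (fun M hM => ih M (gen_subset _ _ hM.1))
    exact ((gen_countable 𝒳 hnested hmeas (n-j)).mono (fun M hM => hM.1))

def Hset (j : ℕ) : Set ℝ := ⋃ M ∈ gen (n - j) 𝒳, Dset 𝒳 n β j M


include hnested hmeas in
lemma Hset_subset_G0 (j : ℕ) : Hset 𝒳 n β j ⊆ ⋃₀ maxEls 𝒳 := by
  intro x hx
  simp only [Hset, Set.mem_iUnion] at hx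
  obtain ⟨M, hM, hxM⟩ := hx
  obtain ⟨R, hR, hMR⟩ := exists_root hM
  exact ⟨R, hR, hMR (Dset_subset 𝒳 n β j M hxM)⟩

include hnested hmeas in
lemma Hset_measurable (j : ℕ) : MeasurableSet (Hset 𝒳 n β j) :=
  MeasurableSet.biUnion (gen_countable 𝒳 hnested hmeas (n-j))
    (fun M hM => Dset_measurable 𝒳 n β hnested hmeas j M (gen_subset _ _ hM))

variable (hβ0 : 0 < β) (hβ1 : β < 1)

include hnested hmeas hβ0 hβ1 in
/-- key per-level loss bound: bad sets' descendant unions have small measure. -/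
lemma loss_bound (j : ℕ) :
    volume (⋃ M ∈ {M | M ∈ gen (n-j) 𝒳 ∧ ¬ keepP 𝒳 n β j M}, Dset 𝒳 n β j M)
      ≤ ENNReal.ofReal (1/β) * volume (⋃₀ maxEls 𝒳 \ Hset 𝒳 n β j) := by
  set Bad := {M | M ∈ gen (n-j) 𝒳 ∧ ¬ keepP 𝒳 n β j M} with hBad
  have hBadsub : Bad ⊆ gen (n-j) 𝒳 := fun M hM => hM.1
  have hBadc : Bad.Countable := (gen_countable 𝒳 hnested hmeas (n-j)).mono hBadsub
  -- per-element bound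
  have key : ∀ M ∈ Bad, volume (Dset 𝒳 n β j M) ≤
      ENNReal.ofReal (1/β) * volume (M \ Dset 𝒳 n β j M) := by
    rintro M ⟨hMg, hMk⟩
    have hMX : M ∈ 𝒳 := gen_subset _ _ hMg
    have hDm : MeasurableSet (Dset 𝒳 n β j M) := Dset_measurable 𝒳 n β hnested hmeas j M hMX
    have hDM : Dset 𝒳 n β j M ⊆ M := Dset_subset 𝒳 n β j M
    have hsum : volume (Dset 𝒳 n β j M) + volume (M \ Dset 𝒳 n β j M) = volume M := by
      have := measure_inter_add_diff (μ := volume) M hDm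
      rwa [Set.inter_eq_self_of_subset_right hDM] at this
    have hMfin : volume M ≠ ⊤ := (hmeas M hMX).2.2.ne
    have hafin : volume (Dset 𝒳 n β j M) ≠ ⊤ :=
      (lt_of_le_of_lt (measure_mono hDM) (hmeas M hMX).2.2).ne
    have hbfin : volume (M \ Dset 𝒳 n β j M) ≠ ⊤ :=
      (lt_of_le_of_lt (measure_mono Set.diff_subset) (hmeas M hMX).2.2).ne
    rw [keepP, not_le] at hMk
    -- pass to reals
    set a := (volume (Dset 𝒳 n β j M)).toReal with ha
    set b := (volume (M \ Dset 𝒳 n β j M)).toReal with hb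
    have hab : a + b = (volume M).toReal := by
      rw [ha, hb, ← ENNReal.toReal_add hafin hbfin, hsum]
    have hreal : a < (1-β) * (a + b) := by
      have h1 : (volume (Dset 𝒳 n β j M)).toReal <
          (ENNReal.ofReal (1-β) * volume M).toReal := by
        refine ENNReal.toReal_strict_mono ?_ hMk
        exact ENNReal.mul_ne_top ENNReal.ofReal_ne_top hMfin
      rwa [ENNReal.toReal_mul, ENNReal.toReal_ofReal (by linarith), ← hab] at h1
    have hb0 : 0 ≤ b := ENNReal.toReal_nonneg
    have hfin2 : a ≤ (1/β) * b := by
      have h3 : β * a ≤ (1 - β) * b := by nlinarith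
      have h4 : β * a ≤ b := by nlinarith
      rw [one_div, mul_comm, ← div_eq_mul_inv, le_div_iff₀ hβ0]
      linarith
    calc volume (Dset 𝒳 n β j M) = ENNReal.ofReal a := (ENNReal.ofReal_toReal hafin).symm
      _ ≤ ENNReal.ofReal ((1/β) * b) := ENNReal.ofReal_le_ofReal hfin2
      _ = ENNReal.ofReal (1/β) * ENNReal.ofReal b :=
          ENNReal.ofReal_mul (by positivity)
      _ = ENNReal.ofReal (1/β) * volume (M \ Dset 𝒳 n β j M) := by
          rw [hb, ENNReal.ofReal_toReal hbfin]
  calc volume (⋃ M ∈ Bad, Dset 𝒳 n β j M)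
      ≤ ∑' (M : Bad), volume (Dset 𝒳 n β j (M : Set ℝ)) :=
        measure_biUnion_le volume hBadc _
    _ ≤ ∑' (M : Bad), ENNReal.ofReal (1/β) * volume ((M : Set ℝ) \ Dset 𝒳 n β j M) :=
        ENNReal.tsum_le_tsum (fun M => key M M.2)
    _ = ENNReal.ofReal (1/β) * ∑' (M : Bad), volume ((M : Set ℝ) \ Dset 𝒳 n β j M) :=
        ENNReal.tsum_mul_left
    _ = ENNReal.ofReal (1/β) * volume (⋃ M ∈ Bad, ((M : Set ℝ) \ Dset 𝒳 n β j M)) := by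
        rw [measure_biUnion hBadc ?_ ?_]
        · intro M hM M' hM' hne
          exact Disjoint.mono Set.diff_subset Set.diff_subset
            (gen_disjoint hnested (hBadsub hM) (hBadsub hM') hne)
        · intro M hM
          exact ((hmeas M (gen_subset _ _ (hBadsub hM))).1).diff
            (Dset_measurable 𝒳 n β hnested hmeas j M (gen_subset _ _ (hBadsub hM)))
    _ ≤ ENNReal.ofReal (1/β) * volume (⋃₀ maxEls 𝒳 \ Hset 𝒳 n β j) := by
        refine mul_le_mul_right (measure_mono ?_) _
        rintro x hx
        simp only [Set.mem_iUnion] at hx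
        obtain ⟨M, hM, hxM, hxD⟩ := hx
        obtain ⟨R, hR, hMR⟩ := exists_root (hBadsub hM)
        refine ⟨⟨R, hR, hMR hxM⟩, ?_⟩
        intro hxH
        simp only [Hset, Set.mem_iUnion] at hxH
        obtain ⟨M', hM', hxM'⟩ := hxH
        have hMeq : M = M' := by
          by_contra hne
          exact Set.disjoint_left.mp
            (gen_disjoint hnested (hBadsub hM) hM' hne) hxM
            (Dset_subset 𝒳 n β j M' hxM')
        exact hxD (hMeq ▸ hxM')

include hnested hmeas in
lemma Hstep (j : ℕ) (hj : j < n) :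
    Hset 𝒳 n β (j+1) = ⋃ M ∈ {M | M ∈ gen (n-j) 𝒳 ∧ keepP 𝒳 n β j M}, Dset 𝒳 n β j M := by
  have harith : n - j = (n - (j+1)) + 1 := by omega
  ext x
  simp only [Hset, Set.mem_iUnion, Set.mem_setOf_eq]
  constructor
  · rintro ⟨N, hN, hxN⟩
    rw [Dset_succ] at hxN
    simp only [Set.mem_iUnion, Set.mem_setOf_eq] at hxN
    obtain ⟨M, ⟨hMg, _, hMk⟩, hxM⟩ := hxN
    exact ⟨M, ⟨hMg, hMk⟩, hxM⟩
  · rintro ⟨M, ⟨hMg, hMk⟩, hxM⟩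
    have hMg' : M ∈ gen ((n - (j+1)) + 1) 𝒳 := by rwa [harith] at hMg
    obtain ⟨N, hN, hMN⟩ := exists_parent hMg'
    refine ⟨N, hN, ?_⟩
    rw [Dset_succ]
    simp only [Set.mem_iUnion, Set.mem_setOf_eq]
    exact ⟨M, ⟨hMg, hMN.subset, hMk⟩, hxM⟩


/-- the chosen subcollection: sets in some generation `≤ n` all of whose ancestors are kept. -/
def Ys : Set (Set ℝ) :=
  {N | (∃ k, k ≤ n ∧ N ∈ gen k 𝒳) ∧
    ∀ j M, j ≤ n → M ∈ gen j 𝒳 → N ⊆ M → keepP 𝒳 n β (n-j) M}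

lemma Ys_subset : Ys 𝒳 n β ⊆ 𝒳 := by
  rintro N ⟨⟨k, _, hNk⟩, _⟩
  exact gen_subset k 𝒳 hNk

lemma Ys_gen (m : ℕ) : gen m (Ys 𝒳 n β) = {N | N ∈ Ys 𝒳 n β ∧ N ∈ gen m 𝒳} := by
  have h := gen_of_graded 𝒳 m 0 (Ys 𝒳 n β) ?_ ?_
  · rwa [Nat.zero_add] at h
  · rintro N ⟨⟨k, _, hNk⟩, _⟩
    exact ⟨k, Nat.zero_le k, hNk⟩
  · rintro k N ⟨⟨k₀, hk₀n, hNk₀⟩, hanc⟩ hNk _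
    have hkeq : k + 1 = k₀ := by
      by_contra hne
      rcases Nat.lt_or_ge (k+1) k₀ with h' | h'
      · exact gen_levels_disjoint h' hNk hNk₀
      · exact gen_levels_disjoint (by omega) hNk₀ hNk
    obtain ⟨M, hMk, hss⟩ := exists_parent hNk
    refine ⟨M, ⟨⟨k, by omega, hMk⟩, ?_⟩, hMk, hss⟩
    intro j M' hj hM' hMM'
    exact hanc j M' hj hM' (hss.subset.trans hMM')

include hnested hmeas in
lemma incl : ∀ (j : ℕ), j ≤ n → ∀ N, N ∈ gen (n-j) 𝒳 →
    (∀ j' M, j' ≤ n → M ∈ gen j' 𝒳 → N ⊆ M → keepP 𝒳 n β (n-j') M) →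
    Dset 𝒳 n β j N ⊆ ⋃₀ {P | P ∈ Ys 𝒳 n β ∧ P ∈ gen n 𝒳} := by
  intro j
  induction j with
  | zero =>
    intro _ N hN hanc
    have hNn : N ∈ gen n 𝒳 := by rwa [Nat.sub_zero] at hN
    exact Set.subset_sUnion_of_mem ⟨⟨⟨n, le_rfl, hNn⟩, hanc⟩, hNn⟩
  | succ j ih =>
    intro hj N hN hanc
    rw [Dset_succ]
    refine Set.iUnion₂_subset ?_
    rintro M ⟨hMg, hMN, hMk⟩
    refine ih (by omega) M hMg ?_
    intro j' M' hj' hM' hMM'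
    have hMX : M ∈ 𝒳 := gen_subset _ _ hMg
    have hM'X : M' ∈ 𝒳 := gen_subset _ _ hM'
    have hNX : N ∈ 𝒳 := gen_subset _ _ hN
    have hMne : M.Nonempty :=
      MeasureTheory.nonempty_of_measure_ne_zero (hmeas M hMX).2.1.ne'
    have hint : (M' ∩ N).Nonempty := ⟨hMne.choose, hMM' hMne.choose_spec, hMN hMne.choose_spec⟩
    rcases hnested M' hM'X N hNX hint with hsub | hsub
    · -- M' ⊆ N
      rcases eq_or_ne M' N with rfl | hne
      · exact hanc j' M' hj' hM' subset_rfl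
      · have hssub : M' ⊂ N := ssubset_of_subset_of_ne hsub hne
        have hlt1 : n - (j+1) < j' := level_lt hM' hN hssub
        -- compare M and M'
        rcases eq_or_ne M M' with rfl | hne2
        · have hj'eq : j' = n - j := by
            by_contra hne3
            rcases Nat.lt_or_ge j' (n-j) with h' | h'
            · exact gen_levels_disjoint h' hM' hMg
            · exact gen_levels_disjoint (by omega) hMg hM'
          rw [hj'eq, show n - (n - j) = j by omega]
          exact hMk
        · have hssub2 : M ⊂ M' := ssubset_of_subset_of_ne hMM' hne2
          have hlt2 : j' < n - j := level_lt hMg hM' hssub2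
          omega
    · exact hanc j' M' hj' hM' hsub

end CombAux





open CombAux

/-- Lemma `lem:comb-3` (monochromatic Jones argument): if `|G_n(𝒳)| > (1-α)|G₀(𝒳)|`, then
there is a subcollection `𝒴 ⊆ 𝒳` with `|G_n(𝒴)| > (1 - α·2^{n+1}/β^{n+1})|G₀(𝒳)|` and
`|N ∩ G_n(𝒴)| ≥ (1-β)|N|` for every `N ∈ 𝒴`. -/
theorem comb_lemma_three (n : ℕ) (α β : ℝ)
    (hβ0 : 0 < β) (hβ1 : β < 1) (hα0 : 0 < α) (hα : α < 2 ^ (-(n : ℝ) - 1) * β ^ (n + 1))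
    (𝒳 : Set (Set ℝ)) (hnested : Nested 𝒳)
    (hmeas : ∀ N ∈ 𝒳, MeasurableSet N ∧ 0 < volume N ∧ volume N < ⊤)
    (hyp : ENNReal.ofReal (1 - α) * volume (⋃₀ maxEls 𝒳) < volume (⋃₀ gen n 𝒳)) :
    ∃ 𝒴 ⊆ 𝒳,
      (ENNReal.ofReal (1 - α * 2 ^ (n + 1) / β ^ (n + 1)) * volume (⋃₀ maxEls 𝒳) <
        volume (⋃₀ gen n 𝒴)) ∧
      ∀ N ∈ 𝒴, ENNReal.ofReal (1 - β) * volume N ≤ volume (N ∩ ⋃₀ gen n 𝒴) := by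
  classical
  -- arithmetic preliminaries
  have h2pow : (2:ℝ) ^ (-(n : ℝ) - 1) = ((2:ℝ) ^ (n+1))⁻¹ := by
    rw [show (-(n:ℝ) - 1) = -(((n+1 : ℕ) : ℝ)) by push_cast; ring]
    rw [Real.rpow_neg (by norm_num), Real.rpow_natCast]
  have hβpow : (0:ℝ) < β ^ (n+1) := pow_pos hβ0 _
  have h2pos : (0:ℝ) < 2 ^ (n+1) := by positivity
  have hαkey : α * 2 ^ (n + 1) / β ^ (n + 1) < 1 := by
    rw [div_lt_one hβpow]
    have := mul_lt_mul_of_pos_right hα h2pos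
    rw [h2pow] at this
    calc α * 2 ^ (n+1) < ((2:ℝ)^(n+1))⁻¹ * β ^ (n+1) * 2 ^ (n+1) := this
      _ = β ^ (n+1) := by field_simp
  have hα1 : α < 1 := by
    have h1 : ((2:ℝ)^(n+1))⁻¹ ≤ 1 := by
      rw [inv_le_one_iff₀]; right; exact one_le_two.trans (le_self_pow₀ one_le_two (by omega))
    have h2 : β ^ (n+1) ≤ 1 := pow_le_one₀ hβ0.le hβ1.le
    nlinarith [hα, h2pow]
  set G0 := ⋃₀ maxEls 𝒳 with hG0def
  have hfinG0 : volume G0 ≠ ⊤ := by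
    intro htop
    rw [htop, ENNReal.mul_top (by
      rw [Ne, ENNReal.ofReal_eq_zero]; linarith)] at hyp
    exact not_top_lt hyp
  have hGn_sub : ⋃₀ gen n 𝒳 ⊆ G0 := by
    rintro x ⟨N, hN, hxN⟩
    obtain ⟨R, hR, hNR⟩ := exists_root hN
    exact ⟨R, hR, hNR hxN⟩
  have hGn_meas : MeasurableSet (⋃₀ gen n 𝒳) :=
    MeasurableSet.sUnion (gen_countable 𝒳 hnested hmeas n)
      (fun M hM => (hmeas M (gen_subset n 𝒳 hM)).1)
  have hGn_fin : volume (⋃₀ gen n 𝒳) ≠ ⊤ :=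
    (lt_of_le_of_lt (measure_mono hGn_sub) (lt_top_iff_ne_top.mpr hfinG0)).ne
  set g := (volume G0).toReal with hgdef
  -- Hset basic facts
  have hH0 : Hset 𝒳 n β 0 = ⋃₀ gen n 𝒳 := by
    simp only [Hset, Nat.sub_zero, Set.sUnion_eq_biUnion]
    rfl
  have hHsub : ∀ j, Hset 𝒳 n β j ⊆ G0 := fun j => Hset_subset_G0 𝒳 n β hnested hmeas j
  have hHfin : ∀ j, volume (Hset 𝒳 n β j) ≠ ⊤ :=
    fun j => (lt_of_le_of_lt (measure_mono (hHsub j)) (lt_top_iff_ne_top.mpr hfinG0)).ne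
  set e : ℕ → ℝ := fun j => (volume (G0 \ Hset 𝒳 n β j)).toReal with hedef
  have hefin : ∀ j, volume (G0 \ Hset 𝒳 n β j) ≠ ⊤ :=
    fun j => (lt_of_le_of_lt (measure_mono Set.diff_subset) (lt_top_iff_ne_top.mpr hfinG0)).ne
  have he_nonneg : ∀ j, 0 ≤ e j := fun j => ENNReal.toReal_nonneg
  have hover : 1 + 1/β ≤ 2/β := by
    rw [le_div_iff₀ hβ0, add_mul, one_mul, div_mul_cancel₀ _ hβ0.ne']
    linarith
  have h2β : (0:ℝ) < 2/β := by positivity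
  -- per-level loss in real form
  have hloss : ∀ j,
      (volume (⋃ M ∈ {M | M ∈ gen (n-j) 𝒳 ∧ ¬ keepP 𝒳 n β j M}, Dset 𝒳 n β j M)).toReal
        ≤ (1/β) * e j := by
    intro j
    have h := loss_bound 𝒳 n β hnested hmeas hβ0 hβ1 j
    have hfin : ENNReal.ofReal (1/β) * volume (G0 \ Hset 𝒳 n β j) ≠ ⊤ :=
      ENNReal.mul_ne_top ENNReal.ofReal_ne_top (hefin j)
    calc (volume (⋃ M ∈ {M | M ∈ gen (n-j) 𝒳 ∧ ¬ keepP 𝒳 n β j M}, Dset 𝒳 n β j M)).toReal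
        ≤ (ENNReal.ofReal (1/β) * volume (G0 \ Hset 𝒳 n β j)).toReal :=
          ENNReal.toReal_mono hfin h
      _ = (1/β) * e j := by
          rw [ENNReal.toReal_mul, ENNReal.toReal_ofReal (by positivity)]
  -- recursion for e
  have hrec : ∀ j, j < n → e (j+1) ≤ (2/β) * e j := by
    intro j hj
    have hstep := Hstep 𝒳 n β hnested hmeas j hj
    have hsplit : G0 \ Hset 𝒳 n β (j+1) ⊆ (G0 \ Hset 𝒳 n β j) ∪
        (⋃ M ∈ {M | M ∈ gen (n-j) 𝒳 ∧ ¬ keepP 𝒳 n β j M}, Dset 𝒳 n β j M) := by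
      rintro x ⟨hxG, hxH⟩
      by_cases hxj : x ∈ Hset 𝒳 n β j
      · right
        simp only [Hset, Set.mem_iUnion] at hxj
        obtain ⟨M, hMg, hxM⟩ := hxj
        by_cases hk : keepP 𝒳 n β j M
        · exfalso
          apply hxH
          rw [hstep]
          simp only [Set.mem_iUnion, Set.mem_setOf_eq]
          exact ⟨M, ⟨hMg, hk⟩, hxM⟩
        · simp only [Set.mem_iUnion, Set.mem_setOf_eq]
          exact ⟨M, ⟨hMg, hk⟩, hxM⟩
      · exact Or.inl ⟨hxG, hxj⟩
    have hm : volume (G0 \ Hset 𝒳 n β (j+1)) ≤ volume (G0 \ Hset 𝒳 n β j) +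
        volume (⋃ M ∈ {M | M ∈ gen (n-j) 𝒳 ∧ ¬ keepP 𝒳 n β j M}, Dset 𝒳 n β j M) :=
      (measure_mono hsplit).trans (measure_union_le _ _)
    have hbadfin : volume (⋃ M ∈ {M | M ∈ gen (n-j) 𝒳 ∧ ¬ keepP 𝒳 n β j M},
        Dset 𝒳 n β j M) ≠ ⊤ := by
      refine (lt_of_le_of_lt (measure_mono ?_) (lt_top_iff_ne_top.mpr hfinG0)).ne
      refine Set.iUnion₂_subset ?_
      rintro M ⟨hMg, _⟩
      obtain ⟨R, hR, hMR⟩ := exists_root hMg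
      exact (Dset_subset 𝒳 n β j M).trans (fun x hx => ⟨R, hR, hMR hx⟩)
    have h1 : e (j+1) ≤ e j + (1/β) * e j := by
      have := ENNReal.toReal_mono (by
        exact ENNReal.add_ne_top.mpr ⟨hefin j, hbadfin⟩) hm
      rw [ENNReal.toReal_add (hefin j) hbadfin] at this
      exact this.trans (by linarith [hloss j])
    calc e (j+1) ≤ e j + (1/β) * e j := h1
      _ = (1 + 1/β) * e j := by ring
      _ ≤ (2/β) * e j := mul_le_mul_of_nonneg_right hover (he_nonneg j)
  -- initial bound
  have he0 : e 0 < α * g := by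
    have hdiff : volume (G0 \ Hset 𝒳 n β 0) = volume G0 - volume (⋃₀ gen n 𝒳) := by
      rw [hH0]
      exact measure_diff hGn_sub hGn_meas.nullMeasurableSet hGn_fin
    have he0eq : e 0 = g - (volume (⋃₀ gen n 𝒳)).toReal := by
      rw [hedef]
      simp only
      rw [hdiff, ENNReal.toReal_sub_of_le (measure_mono hGn_sub) hfinG0]
    have hyp' : (1 - α) * g < (volume (⋃₀ gen n 𝒳)).toReal := by
      have := ENNReal.toReal_strict_mono hGn_fin hyp
      rwa [ENNReal.toReal_mul, ENNReal.toReal_ofReal (by linarith)] at this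
    rw [he0eq]
    linarith
  -- iterated bound
  have hebound : ∀ j, j ≤ n → e j < (2/β)^j * (α * g) := by
    intro j
    induction j with
    | zero => intro _; rw [pow_zero, one_mul]; exact he0
    | succ j ih =>
      intro hj
      have h1 := hrec j (by omega)
      have h2 := ih (by omega)
      calc e (j+1) ≤ (2/β) * e j := h1
        _ < (2/β) * ((2/β)^j * (α * g)) := by
            exact mul_lt_mul_of_pos_left h2 h2β
        _ = (2/β)^(j+1) * (α * g) := by ring
  -- the subcollection
  refine ⟨Ys 𝒳 n β, Ys_subset 𝒳 n β, ?_, ?_⟩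
  · -- main measure bound
    rw [Ys_gen]
    set Yn := ⋃₀ {P | P ∈ Ys 𝒳 n β ∧ P ∈ gen n 𝒳} with hYndef
    have hYn_sub : Yn ⊆ G0 := by
      rintro x ⟨P, ⟨_, hPg⟩, hxP⟩
      obtain ⟨R, hR, hPR⟩ := exists_root hPg
      exact ⟨R, hR, hPR hxP⟩
    have hYn_fin : volume Yn ≠ ⊤ :=
      (lt_of_le_of_lt (measure_mono hYn_sub) (lt_top_iff_ne_top.mpr hfinG0)).ne
    have hKU : (⋃ M ∈ {M | M ∈ gen (n-n) 𝒳 ∧ keepP 𝒳 n β n M}, Dset 𝒳 n β n M) ⊆ Yn := by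
      refine Set.iUnion₂_subset ?_
      rintro M ⟨hMg, hMk⟩
      refine incl 𝒳 n β hnested hmeas n le_rfl M hMg ?_
      intro j' M' hj' hM' hMM'
      have hM0 : M ∈ gen 0 𝒳 := by rwa [Nat.sub_self] at hMg
      have hMeq : M' = M := by
        rcases eq_or_ne M M' with rfl | hne
        · rfl
        · exact absurd (ssubset_of_subset_of_ne hMM' hne) (hM0.2 M' (gen_subset j' 𝒳 hM'))
      subst hMeq
      have hj0 : j' = 0 := by
        by_contra hne
        exact gen_levels_disjoint (by omega) hM0 hM'
      rw [hj0, Nat.sub_zero]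
      exact hMk
    have hHn_split : Hset 𝒳 n β n ⊆
        (⋃ M ∈ {M | M ∈ gen (n-n) 𝒳 ∧ keepP 𝒳 n β n M}, Dset 𝒳 n β n M) ∪
        (⋃ M ∈ {M | M ∈ gen (n-n) 𝒳 ∧ ¬ keepP 𝒳 n β n M}, Dset 𝒳 n β n M) := by
      intro x hx
      simp only [Hset, Set.mem_iUnion] at hx
      obtain ⟨M, hMg, hxM⟩ := hx
      by_cases hk : keepP 𝒳 n β n M
      · left; simp only [Set.mem_iUnion, Set.mem_setOf_eq]; exact ⟨M, ⟨hMg, hk⟩, hxM⟩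
      · right; simp only [Set.mem_iUnion, Set.mem_setOf_eq]; exact ⟨M, ⟨hMg, hk⟩, hxM⟩
    have hKUfin : volume (⋃ M ∈ {M | M ∈ gen (n-n) 𝒳 ∧ keepP 𝒳 n β n M},
        Dset 𝒳 n β n M) ≠ ⊤ :=
      (lt_of_le_of_lt (measure_mono (hKU.trans hYn_sub)) (lt_top_iff_ne_top.mpr hfinG0)).ne
    have hbadfin : volume (⋃ M ∈ {M | M ∈ gen (n-n) 𝒳 ∧ ¬ keepP 𝒳 n β n M},
        Dset 𝒳 n β n M) ≠ ⊤ := by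
      refine (lt_of_le_of_lt (measure_mono ?_) (lt_top_iff_ne_top.mpr hfinG0)).ne
      refine Set.iUnion₂_subset ?_
      rintro M ⟨hMg, _⟩
      obtain ⟨R, hR, hMR⟩ := exists_root hMg
      exact (Dset_subset 𝒳 n β n M).trans (fun x hx => ⟨R, hR, hMR hx⟩)
    -- real chain
    have h1 : g ≤ (volume (Hset 𝒳 n β n)).toReal + e n := by
      have hsub : G0 ⊆ Hset 𝒳 n β n ∪ (G0 \ Hset 𝒳 n β n) := by
        intro x hx
        by_cases h : x ∈ Hset 𝒳 n β n
        · exact Or.inl h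
        · exact Or.inr ⟨hx, h⟩
      have hm : volume G0 ≤ volume (Hset 𝒳 n β n) + volume (G0 \ Hset 𝒳 n β n) :=
        (measure_mono hsub).trans (measure_union_le _ _)
      have := ENNReal.toReal_mono (ENNReal.add_ne_top.mpr ⟨hHfin n, hefin n⟩) hm
      rwa [ENNReal.toReal_add (hHfin n) (hefin n)] at this
    have h2 : (volume (Hset 𝒳 n β n)).toReal ≤
        (volume (⋃ M ∈ {M | M ∈ gen (n-n) 𝒳 ∧ keepP 𝒳 n β n M}, Dset 𝒳 n β n M)).toReal
          + (1/β) * e n := by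
      have hm : volume (Hset 𝒳 n β n) ≤
          volume (⋃ M ∈ {M | M ∈ gen (n-n) 𝒳 ∧ keepP 𝒳 n β n M}, Dset 𝒳 n β n M) +
          volume (⋃ M ∈ {M | M ∈ gen (n-n) 𝒳 ∧ ¬ keepP 𝒳 n β n M}, Dset 𝒳 n β n M) :=
        (measure_mono hHn_split).trans (measure_union_le _ _)
      have := ENNReal.toReal_mono (ENNReal.add_ne_top.mpr ⟨hKUfin, hbadfin⟩) hm
      rw [ENNReal.toReal_add hKUfin hbadfin] at this
      exact this.trans (by linarith [hloss n])
    have h3 : (volume (⋃ M ∈ {M | M ∈ gen (n-n) 𝒳 ∧ keepP 𝒳 n β n M},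
        Dset 𝒳 n β n M)).toReal ≤ (volume Yn).toReal :=
      ENNReal.toReal_mono hYn_fin (measure_mono hKU)
    have hfinal : (1 - α * 2 ^ (n + 1) / β ^ (n + 1)) * g < (volume Yn).toReal := by
      have hen := hebound n le_rfl
      have hchain : (volume Yn).toReal ≥ g - (2/β) * e n := by
        have : g - e n - (1/β) * e n ≤ (volume Yn).toReal := by linarith
        have heq : (1 + 1/β) * e n ≤ (2/β) * e n :=
          mul_le_mul_of_nonneg_right hover (he_nonneg n)
        linarith
      have hlast : (2/β) * e n < (2/β)^(n+1) * (α * g) := by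
        calc (2/β) * e n < (2/β) * ((2/β)^n * (α * g)) := mul_lt_mul_of_pos_left hen h2β
          _ = (2/β)^(n+1) * (α * g) := by ring
      have hrw : (2/β)^(n+1) * (α * g) = (α * 2 ^ (n + 1) / β ^ (n + 1)) * g := by
        rw [div_pow]
        ring
      nlinarith [hchain, hlast]
    have hLfin : ENNReal.ofReal (1 - α * 2 ^ (n + 1) / β ^ (n + 1)) * volume G0 ≠ ⊤ :=
      ENNReal.mul_ne_top ENNReal.ofReal_ne_top hfinG0
    rw [← ENNReal.toReal_lt_toReal hLfin hYn_fin] at *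
    rwa [ENNReal.toReal_mul, ENNReal.toReal_ofReal (by linarith)]
  · -- density condition
    intro N hN
    obtain ⟨⟨k, hkn, hNk⟩, hanc⟩ := hN
    have hkeep : keepP 𝒳 n β (n-k) N := hanc k N hkn hNk subset_rfl
    have hNk' : N ∈ gen (n - (n-k)) 𝒳 := by rwa [show n - (n-k) = k by omega]
    have hsubs : Dset 𝒳 n β (n-k) N ⊆ N ∩ ⋃₀ gen n (Ys 𝒳 n β) := by
      refine Set.subset_inter (Dset_subset 𝒳 n β (n-k) N) ?_
      rw [Ys_gen]
      exact incl 𝒳 n β hnested hmeas (n-k) (by omega) N hNk' hanc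
    calc ENNReal.ofReal (1-β) * volume N ≤ volume (Dset 𝒳 n β (n-k) N) := hkeep
      _ ≤ volume (N ∩ ⋃₀ gen n (Ys 𝒳 n β)) := measure_mono hsubs
end

section
/- Let n, N ∈ ℕ₀ and suppose (ℬ_I : I ∈ 𝒟ⁿ) with ℬ_I ⊆ 𝒟^N satisfies Jones' compatibility conditions (J1)–(J4) with constant κ_J ≥ 1. Then the sets B_I = ⋃ℬ_I satisfy: B_{I₀} ⊆ B_I if and only if I₀ ⊆ I, for all I₀, I ∈ 𝒟ⁿ. -/
open MeasureTheory

/-- Real-valued measure. -/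
noncomputable def msr (s : Set ℝ) : ℝ := (volume s).toReal

/-- Jones' compatibility conditions (J1)–(J4) with constant `κ` for a family
`(ℬ_I : I ∈ 𝒟ⁿ)` of collections `ℬ k j ⊆ 𝒩` indexed by the dyadic intervals of level `≤ n`.
(J1): `𝒩` consists of measurable sets of finite positive measure and is nested, and each
`ℬ k j` is finite;  (J2): each `ℬ k j` is nonempty and consists of pairwise disjoint sets,
and distinct indices give disjoint collections;  (J3): `B_{I₀} ∩ B_{I₁} = ∅` if
`I₀ ∩ I₁ = ∅` and `B_{I₀} ⊆ B_{I₁}` if `I₀ ⊆ I₁`, where `B_I = ⋃ℬ_I`;  (J4): for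
`I₀ ⊆ I` and `N ∈ ℬ_I`, `|N ∩ B_{I₀}|/|N| ≥ κ⁻¹ |B_{I₀}|/|B_I|`. -/
def JonesConds (n : ℕ) (𝒩 : Set (Set ℝ)) (ℬ : ℕ → ℕ → Set (Set ℝ)) (κ : ℝ) : Prop :=
  -- (J1)
  ((∀ N ∈ 𝒩, MeasurableSet N ∧ 0 < volume N ∧ volume N < ⊤) ∧
   (∀ N ∈ 𝒩, ∀ M ∈ 𝒩, (N ∩ M).Nonempty → N ⊆ M ∨ M ⊆ N) ∧
   (∀ k j, k ≤ n → j < 2 ^ k → (ℬ k j).Finite ∧ ℬ k j ⊆ 𝒩)) ∧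
  -- (J2)
  ((∀ k j, k ≤ n → j < 2 ^ k → (ℬ k j).Nonempty ∧
      ∀ N ∈ ℬ k j, ∀ M ∈ ℬ k j, N ≠ M → N ∩ M = ∅) ∧
   (∀ k j k' j', k ≤ n → j < 2 ^ k → k' ≤ n → j' < 2 ^ k' → (k, j) ≠ (k', j') →
      ℬ k j ∩ ℬ k' j' = ∅)) ∧
  -- (J3)
  ((∀ k j k' j', k ≤ n → j < 2 ^ k → k' ≤ n → j' < 2 ^ k' →
      dyadicSet k j ∩ dyadicSet k' j' = ∅ → (⋃₀ ℬ k j) ∩ (⋃₀ ℬ k' j') = ∅) ∧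
   (∀ k j k' j', k ≤ n → j < 2 ^ k → k' ≤ n → j' < 2 ^ k' →
      dyadicSet k j ⊆ dyadicSet k' j' → ⋃₀ ℬ k j ⊆ ⋃₀ ℬ k' j')) ∧
  -- (J4)
  (∀ k j k' j', k ≤ n → j < 2 ^ k → k' ≤ n → j' < 2 ^ k' →
      dyadicSet k j ⊆ dyadicSet k' j' → ∀ N ∈ ℬ k' j',
        msr (N ∩ ⋃₀ ℬ k j) / msr N ≥ κ⁻¹ * msr (⋃₀ ℬ k j) / msr (⋃₀ ℬ k' j'))

/-- The collection `𝒟^N` of dyadic intervals of level at most `N`. -/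
def dyadics (N : ℕ) : Set (Set ℝ) :=
  {S | ∃ k j, k ≤ N ∧ j < 2 ^ k ∧ S = dyadicSet k j}

lemma dyadic_nonempty (k j : ℕ) : (dyadicSet k j).Nonempty := by
  refine ⟨(j : ℝ) / 2 ^ k, le_refl _, ?_⟩
  gcongr
  linarith

lemma pow_split (k k' : ℕ) (h : k ≤ k') : (2:ℝ) ^ k' = 2 ^ k * 2 ^ (k' - k) := by
  rw [← pow_add]; congr 1; omega

lemma cast_div_le_left (k k' a b : ℕ) (hkk : k ≤ k') (h : b * 2 ^ (k' - k) ≤ a) :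
    (b : ℝ) / 2 ^ k ≤ (a : ℝ) / 2 ^ k' := by
  rw [div_le_div_iff₀ (by positivity) (by positivity), pow_split k k' hkk]
  have : ((b * 2 ^ (k' - k) : ℕ) : ℝ) ≤ (a : ℝ) := by exact_mod_cast h
  push_cast at this
  nlinarith [pow_pos (by norm_num : (0:ℝ) < 2) k]

lemma cast_div_le_right (k k' a b : ℕ) (hkk : k ≤ k') (h : a ≤ b * 2 ^ (k' - k)) :
    (a : ℝ) / 2 ^ k' ≤ (b : ℝ) / 2 ^ k := by
  rw [div_le_div_iff₀ (by positivity) (by positivity), pow_split k k' hkk]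
  have : ((a : ℕ) : ℝ) ≤ ((b * 2 ^ (k' - k) : ℕ) : ℝ) := by exact_mod_cast h
  push_cast at this
  nlinarith [pow_pos (by norm_num : (0:ℝ) < 2) k]

lemma dyadic_subset_of (k k' j j' : ℕ) (hkk : k ≤ k')
    (h1 : j * 2 ^ (k' - k) ≤ j') (h2 : j' + 1 ≤ (j + 1) * 2 ^ (k' - k)) :
    dyadicSet k' j' ⊆ dyadicSet k j := by
  rintro x ⟨hx1, hx2⟩
  refine ⟨le_trans (cast_div_le_left k k' j' j hkk h1) hx1, lt_of_lt_of_le hx2 ?_⟩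
  have := cast_div_le_right k k' (j' + 1) (j + 1) hkk h2
  push_cast at this
  convert this using 2 <;> push_cast <;> ring

lemma dyadic_sub_or_disj (k k' j j' : ℕ) (hkk : k ≤ k') :
    dyadicSet k' j' ⊆ dyadicSet k j ∨ dyadicSet k' j' ∩ dyadicSet k j = ∅ := by
  by_cases h1 : j' < j * 2 ^ (k' - k)
  · right
    ext x
    simp only [dyadicSet, Set.mem_inter_iff, Set.mem_Ico, Set.mem_empty_iff_false, iff_false,
      not_and, and_imp]
    intro _ hb hc
    exfalso
    have : ((j' : ℝ) + 1) / 2 ^ k' ≤ (j : ℝ) / 2 ^ k := by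
      have := cast_div_le_right k k' (j' + 1) j hkk (by omega)
      push_cast at this; convert this using 2 <;> push_cast <;> ring
    linarith
  · by_cases h2 : j' + 1 ≤ (j + 1) * 2 ^ (k' - k)
    · exact Or.inl (dyadic_subset_of k k' j j' hkk (by omega) h2)
    · right
      ext x
      simp only [dyadicSet, Set.mem_inter_iff, Set.mem_Ico, Set.mem_empty_iff_false, iff_false,
        not_and, and_imp]
      intro ha _ _ hd
      exfalso
      have : ((j : ℝ) + 1) / 2 ^ k ≤ (j' : ℝ) / 2 ^ k' := by
        have := cast_div_le_left k k' j' (j + 1) hkk (by omega)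
        push_cast at this; convert this using 2 <;> push_cast <;> ring
      linarith

lemma dyadic_disjoint_same (k j j' : ℕ) (h : j ≠ j') :
    dyadicSet k j ∩ dyadicSet k j' = ∅ := by
  rcases Nat.lt_or_ge j j' with hlt | hge
  · ext x
    simp only [dyadicSet, Set.mem_inter_iff, Set.mem_Ico, Set.mem_empty_iff_false, iff_false,
      not_and, and_imp]
    intro _ hb hc _
    exfalso
    have : ((j : ℝ) + 1) / 2 ^ k ≤ (j' : ℝ) / 2 ^ k := by
      gcongr
      exact_mod_cast (by exact_mod_cast Nat.succ_le_of_lt hlt : ((j + 1 : ℕ) : ℝ) ≤ (j' : ℝ))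
    linarith
  · have hlt : j' < j := lt_of_le_of_ne hge (Ne.symm h)
    ext x
    simp only [dyadicSet, Set.mem_inter_iff, Set.mem_Ico, Set.mem_empty_iff_false, iff_false,
      not_and, and_imp]
    intro ha _ _ hd
    exfalso
    have : ((j' : ℝ) + 1) / 2 ^ k ≤ (j : ℝ) / 2 ^ k := by
      gcongr
      exact_mod_cast (by exact_mod_cast Nat.succ_le_of_lt hlt : ((j' + 1 : ℕ) : ℝ) ≤ (j : ℝ))
    linarith

-- child lemma
lemma dyadic_child (k k' j j' : ℕ) (hkk : k < k')
    (hsub : dyadicSet k' j' ⊆ dyadicSet k j) :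
    ∃ b ≤ 1, dyadicSet k' j' ⊆ dyadicSet (k + 1) (2 * j + b) := by
  obtain ⟨x, hx⟩ := dyadic_nonempty k' j'
  have hxj := hsub hx
  have hhalf : ((2 * j : ℕ) : ℝ) / 2 ^ (k + 1) = (j : ℝ) / 2 ^ k := by
    push_cast; rw [pow_succ]; ring
  by_cases hx2 : x < ((2 * j : ℝ) + 1) / 2 ^ (k + 1)
  · refine ⟨0, by norm_num, ?_⟩
    rcases dyadic_sub_or_disj (k + 1) k' (2 * j + 0) j' (by omega) with hs | hd
    · exact hs
    · exfalso
      have hxc : x ∈ dyadicSet (k + 1) (2 * j + 0) := by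
        refine ⟨?_, ?_⟩
        · simp only [Nat.add_zero]
          rw [show ((2 * j : ℕ) : ℝ) = (2 * j : ℝ) by push_cast; ring] at hhalf ⊢
          rw [hhalf]; exact hxj.1
        · simpa using hx2
      have : x ∈ (∅ : Set ℝ) := hd ▸ ⟨hx, hxc⟩
      exact this
  · refine ⟨1, le_refl _, ?_⟩
    rcases dyadic_sub_or_disj (k + 1) k' (2 * j + 1) j' (by omega) with hs | hd
    · exact hs
    · exfalso
      have hxc : x ∈ dyadicSet (k + 1) (2 * j + 1) := by
        refine ⟨?_, ?_⟩
        · push_cast; push_neg at hx2; linarith [hx2]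
        · push_cast
          have : ((j : ℝ) + 1) / 2 ^ k = (2 * j + 1 + 1) / 2 ^ (k + 1) := by
            rw [pow_succ]; ring
          rw [← this]; exact hxj.2
      have : x ∈ (∅ : Set ℝ) := hd ▸ ⟨hx, hxc⟩
      exact this


/-- Lemma 3.3 (ii): under Jones' conditions with `ℬ_I ⊆ 𝒟^N`, one has
`B_{I₀} ⊆ B_I` if and only if `I₀ ⊆ I`. -/
theorem jones_subset_iff (n N : ℕ) (κ : ℝ) (hκ : 1 ≤ κ)
    (ℬ : ℕ → ℕ → Set (Set ℝ)) (hJ : JonesConds n (dyadics N) ℬ κ) :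
    ∀ k j k' j', k ≤ n → j < 2 ^ k → k' ≤ n → j' < 2 ^ k' →
      (⋃₀ ℬ k j ⊆ ⋃₀ ℬ k' j' ↔ dyadicSet k j ⊆ dyadicSet k' j') := by

  obtain ⟨⟨hN1, _, hJ1⟩, ⟨hJ2, _⟩, ⟨hJ3d, hJ3s⟩, _⟩ := hJ
  have hBne : ∀ a b, a ≤ n → b < 2 ^ a → (⋃₀ ℬ a b).Nonempty := by
    intro a b ha hb
    obtain ⟨Ns, hNs⟩ := (hJ2 a b ha hb).1
    have hNin : Ns ∈ dyadics N := (hJ1 a b ha hb).2 hNs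
    have hpos := (hN1 Ns hNin).2.1
    obtain ⟨x, hx⟩ := MeasureTheory.nonempty_of_measure_ne_zero (ne_of_gt hpos)
    exact ⟨x, Ns, hNs, hx⟩
  intro k j k' j' hk hj hk' hj'
  constructor
  · intro h
    rcases Nat.lt_or_ge k k' with hlt | hge
    · exfalso
      rcases dyadic_sub_or_disj k k' j j' (le_of_lt hlt) with hs | hd
      · -- dyadicSet k' j' ⊆ dyadicSet k j, strict since k < k'
        obtain ⟨b, hb1, hsub⟩ := dyadic_child k k' j j' hlt hs
        set j₂ := 2 * j + (1 - b) with hj₂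
        have hk1 : k + 1 ≤ n := by omega
        have hjb : 2 * j + b < 2 ^ (k + 1) := by
          have : 2 ^ (k + 1) = 2 * 2 ^ k := by ring
          omega
        have hjb2 : j₂ < 2 ^ (k + 1) := by
          have : 2 ^ (k + 1) = 2 * 2 ^ k := by ring
          omega
        have hsibpar : dyadicSet (k + 1) j₂ ⊆ dyadicSet k j := by
          have h21 : 2 ^ (k + 1 - k) = 2 := by
            have hkk : k + 1 - k = 1 := by omega
            rw [hkk, pow_one]
          apply dyadic_subset_of k (k + 1) j j₂ (by omega) <;> rw [h21] <;> omega
        have hchain : ⋃₀ ℬ (k + 1) j₂ ⊆ ⋃₀ ℬ (k + 1) (2 * j + b) := by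
          refine subset_trans (hJ3s (k + 1) j₂ k j hk1 hjb2 hk hj hsibpar) ?_
          refine subset_trans h ?_
          exact hJ3s k' j' (k + 1) (2 * j + b) hk' hj' hk1 hjb hsub
        have hdisj : dyadicSet (k + 1) j₂ ∩ dyadicSet (k + 1) (2 * j + b) = ∅ :=
          dyadic_disjoint_same (k + 1) j₂ (2 * j + b) (by omega)
        have hBdisj := hJ3d (k + 1) j₂ (k + 1) (2 * j + b) hk1 hjb2 hk1 hjb hdisj
        obtain ⟨x, hx⟩ := hBne (k + 1) j₂ hk1 hjb2
        have : x ∈ (∅ : Set ℝ) := hBdisj ▸ ⟨hx, hchain hx⟩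
        exact this
      · -- disjoint intervals
        have hBdisj := hJ3d k j k' j' hk hj hk' hj' (by rw [Set.inter_comm] at hd; exact hd)
        obtain ⟨x, hx⟩ := hBne k j hk hj
        have : x ∈ (∅ : Set ℝ) := hBdisj ▸ ⟨hx, h hx⟩
        exact this
    · rcases dyadic_sub_or_disj k' k j' j hge with hs | hd
      · exact hs
      · exfalso
        have hBdisj := hJ3d k j k' j' hk hj hk' hj' hd
        obtain ⟨x, hx⟩ := hBne k j hk hj
        have : x ∈ (∅ : Set ℝ) := hBdisj ▸ ⟨hx, h hx⟩
        exact this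
  · intro h
    exact hJ3s k j k' j' hk hj hk' hj' h
end

section
/- Jones' compatibility conditions are stable under reiteration: let (𝒜_I : I ∈ 𝒟^N) satisfy (J1)–(J4) with constant κ_J, with A_I = ⋃𝒜_I, and let 𝒩 = {A_I : I ∈ 𝒟^N}. Suppose (ℬ_J : J ∈ 𝒟ⁿ) with ℬ_J ⊆ 𝒩 also satisfies (J1)–(J4) with constant κ_J. Define 𝒞_J = ⋃_{A_I ∈ ℬ_J} 𝒜_I. Then (𝒞_J : J ∈ 𝒟ⁿ) satisfies (J1)–(J4) with constant κ_J². -/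
open MeasureTheory

lemma dyadic_subset_of_bounds {k k' j j' : ℕ} (hk : k ≤ k')
    (h1 : j * 2^(k'-k) ≤ j') (h2 : j' + 1 ≤ (j+1) * 2^(k'-k)) :
    dyadicSet k' j' ⊆ dyadicSet k j := by
  have hpow : (2:ℝ)^k' = 2^k * 2^(k'-k) := by rw [← pow_add]; congr 1; omega
  have h1' : (j:ℝ) * 2^(k'-k) ≤ j' := by exact_mod_cast h1
  have h2' : (j':ℝ) + 1 ≤ ((j:ℝ)+1) * 2^(k'-k) := by exact_mod_cast h2
  intro x hx
  simp only [dyadicSet, Set.mem_Ico] at hx ⊢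
  obtain ⟨hx1, hx2⟩ := hx
  have p1 : (0:ℝ) < 2^k := by positivity
  have p2 : (0:ℝ) < 2^k' := by positivity
  constructor
  · refine le_trans ?_ hx1
    rw [div_le_div_iff₀ p1 p2, hpow]
    nlinarith
  · refine lt_of_lt_of_le hx2 ?_
    rw [div_le_div_iff₀ p2 p1, hpow]
    nlinarith

lemma dyadic_bounds_of_mem {k k' j j' : ℕ} (hk : k ≤ k') {x : ℝ}
    (hx : x ∈ dyadicSet k j) (hx' : x ∈ dyadicSet k' j') :
    j * 2^(k'-k) ≤ j' ∧ j' + 1 ≤ (j+1) * 2^(k'-k) := by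
  simp only [dyadicSet, Set.mem_Ico] at hx hx'
  have hpow : (2:ℝ)^k' = 2^k * 2^(k'-k) := by rw [← pow_add]; congr 1; omega
  have p1 : (0:ℝ) < 2^k := by positivity
  have p2 : (0:ℝ) < 2^k' := by positivity
  have e1 : (j:ℝ)/2^k < ((j':ℝ)+1)/2^k' := lt_of_le_of_lt hx.1 hx'.2
  have e2 : (j':ℝ)/2^k' < ((j:ℝ)+1)/2^k := lt_of_le_of_lt hx'.1 hx.2
  rw [div_lt_div_iff₀ p1 p2] at e1
  rw [div_lt_div_iff₀ p2 p1] at e2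
  rw [hpow] at e1 e2
  have f1 : (j:ℝ) * 2^(k'-k) < (j':ℝ) + 1 := by nlinarith
  have f2 : (j':ℝ) < ((j:ℝ)+1) * 2^(k'-k) := by nlinarith
  constructor
  · have : j * 2^(k'-k) < j' + 1 := by exact_mod_cast f1
    omega
  · have : j' < (j+1) * 2^(k'-k) := by exact_mod_cast f2
    omega

lemma dyadic_eq_of_mem_same {k j j' : ℕ} {x : ℝ}
    (hx : x ∈ dyadicSet k j) (hx' : x ∈ dyadicSet k j') : j = j' := by
  have h := dyadic_bounds_of_mem (le_refl k) hx hx'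
  simp only [Nat.sub_self, pow_zero, mul_one] at h
  omega

lemma A_nonempty {N : ℕ} {𝓜 : Set (Set ℝ)} {𝒜 : ℕ → ℕ → Set (Set ℝ)} {κ : ℝ}
    (hA : JonesConds N 𝓜 𝒜 κ) {k j : ℕ} (hk : k ≤ N) (hj : j < 2^k) :
    (⋃₀ 𝒜 k j).Nonempty := by
  obtain ⟨M, hM⟩ := (hA.2.1.1 k j hk hj).1
  have hM𝓜 : M ∈ 𝓜 := (hA.1.2.2 k j hk hj).2 hM
  have hpos := (hA.1.1 M hM𝓜).2.1
  obtain ⟨x, hx⟩ := nonempty_of_measure_ne_zero hpos.ne'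
  exact ⟨x, M, hM, hx⟩

lemma A_inj_aux {N : ℕ} {𝓜 : Set (Set ℝ)} {𝒜 : ℕ → ℕ → Set (Set ℝ)} {κ : ℝ}
    (hA : JonesConds N 𝓜 𝒜 κ) {k j k' j' : ℕ} (hk : k ≤ N) (hj : j < 2^k)
    (hk' : k' ≤ N) (hj' : j' < 2^k') (hkk' : k ≤ k')
    (heq : ⋃₀ 𝒜 k j = ⋃₀ 𝒜 k' j') : k = k' ∧ j = j' := by
  by_cases hd : dyadicSet k j ∩ dyadicSet k' j' = ∅
  · exfalso
    have h := hA.2.2.1.1 k j k' j' hk hj hk' hj' hd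
    obtain ⟨x, hx⟩ := A_nonempty hA hk hj
    exact Set.eq_empty_iff_forall_notMem.mp h x ⟨hx, heq ▸ hx⟩
  · obtain ⟨x, hx1, hx2⟩ := Set.nonempty_iff_ne_empty.mpr hd
    obtain ⟨b1, b2⟩ := dyadic_bounds_of_mem hkk' hx1 hx2
    rcases eq_or_lt_of_le hkk' with rfl | hlt
    · simp only [Nat.sub_self, pow_zero, mul_one] at b1 b2
      exact ⟨rfl, by omega⟩
    · exfalso
      obtain ⟨m, hm⟩ : 2 ∣ 2^(k'-k) := dvd_pow_self 2 (by omega)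
      set j'' := if j' % 2 = 0 then j'+1 else j'-1 with hj''def
      have hj''lt : j'' < 2^k' := by
        obtain ⟨m', hm'⟩ : 2 ∣ 2^k' := dvd_pow_self 2 (by omega)
        simp only [hj''def]; split <;> omega
      have hne : j'' ≠ j' := by simp only [hj''def]; split <;> omega
      have hsub : dyadicSet k' j'' ⊆ dyadicSet k j := by
        apply dyadic_subset_of_bounds hkk' <;>
        · set a := j * 2^(k'-k) with ha
          set b := (j+1) * 2^(k'-k) with hbdef
          have h2a : 2 ∣ a := by rw [ha, hm]; exact ⟨j * m, by ring⟩
          have h2b : 2 ∣ b := by rw [hbdef, hm]; exact ⟨(j+1) * m, by ring⟩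
          simp only [hj''def]; split <;> omega
      have hAsub : ⋃₀ 𝒜 k' j'' ⊆ ⋃₀ 𝒜 k' j' :=
        (hA.2.2.1.2 k' j'' k j hk' hj''lt hk hj hsub).trans heq.subset
      have hdisj : dyadicSet k' j'' ∩ dyadicSet k' j' = ∅ := by
        rw [Set.eq_empty_iff_forall_notMem]
        rintro y ⟨hy1, hy2⟩
        exact hne (dyadic_eq_of_mem_same hy1 hy2)
      have hAdisj := hA.2.2.1.1 k' j'' k' j' hk' hj''lt hk' hj' hdisj
      obtain ⟨y, hy⟩ := A_nonempty hA hk' hj''lt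
      exact Set.eq_empty_iff_forall_notMem.mp hAdisj y ⟨hy, hAsub hy⟩

lemma A_inj {N : ℕ} {𝓜 : Set (Set ℝ)} {𝒜 : ℕ → ℕ → Set (Set ℝ)} {κ : ℝ}
    (hA : JonesConds N 𝓜 𝒜 κ) {k j k' j' : ℕ} (hk : k ≤ N) (hj : j < 2^k)
    (hk' : k' ≤ N) (hj' : j' < 2^k')
    (heq : ⋃₀ 𝒜 k j = ⋃₀ 𝒜 k' j') : k = k' ∧ j = j' := by
  rcases le_total k k' with h | h
  · exact A_inj_aux hA hk hj hk' hj' h heq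
  · obtain ⟨a, b⟩ := A_inj_aux hA hk' hj' hk hj h heq.symm
    exact ⟨a.symm, b.symm⟩

lemma A_dyadic_sub {N : ℕ} {𝓜 : Set (Set ℝ)} {𝒜 : ℕ → ℕ → Set (Set ℝ)} {κ : ℝ}
    (hA : JonesConds N 𝓜 𝒜 κ) {k j k' j' : ℕ} (hk : k ≤ N) (hj : j < 2^k)
    (hk' : k' ≤ N) (hj' : j' < 2^k')
    (hsub : ⋃₀ 𝒜 k j ⊆ ⋃₀ 𝒜 k' j') : dyadicSet k j ⊆ dyadicSet k' j' := by
  by_cases hd : dyadicSet k j ∩ dyadicSet k' j' = ∅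
  · exfalso
    have h := hA.2.2.1.1 k j k' j' hk hj hk' hj' hd
    obtain ⟨x, hx⟩ := A_nonempty hA hk hj
    exact Set.eq_empty_iff_forall_notMem.mp h x ⟨hx, hsub hx⟩
  · obtain ⟨x, hx1, hx2⟩ := Set.nonempty_iff_ne_empty.mpr hd
    rcases le_total k' k with h | h
    · obtain ⟨b1, b2⟩ := dyadic_bounds_of_mem h hx2 hx1
      exact dyadic_subset_of_bounds h b1 b2
    · obtain ⟨b1, b2⟩ := dyadic_bounds_of_mem h hx1 hx2
      have hsub' := dyadic_subset_of_bounds h b1 b2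
      have hA' := hA.2.2.1.2 k' j' k j hk' hj' hk hj hsub'
      obtain ⟨rfl, rfl⟩ := A_inj hA hk hj hk' hj' (le_antisymm hsub hA')
      exact le_refl _

/-- Theorem 3.2 (reiteration): if `(𝒜_I : I ∈ 𝒟^N)` satisfies Jones' conditions (J1)–(J4)
with constant `κ` (inside an ambient nested collection `𝓜`), `𝒩 = {A_I : I ∈ 𝒟^N}` with
`A_I = ⋃𝒜_I`, and `(ℬ_J : J ∈ 𝒟ⁿ)` with `ℬ_J ⊆ 𝒩` also satisfies (J1)–(J4) with constant
`κ`, then the reiterated family `𝒞_J = ⋃_{A_I ∈ ℬ_J} 𝒜_I` satisfies (J1)–(J4) with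
constant `κ²`. -/
theorem jones_reiteration (n N : ℕ) (κ : ℝ) (hκ : 1 ≤ κ)
    (𝓜 : Set (Set ℝ)) (𝒜 : ℕ → ℕ → Set (Set ℝ))
    (hA : JonesConds N 𝓜 𝒜 κ)
    (ℬ : ℕ → ℕ → Set (Set ℝ))
    (hB : JonesConds n {S | ∃ k j, k ≤ N ∧ j < 2 ^ k ∧ S = ⋃₀ 𝒜 k j} ℬ κ)
    (𝒞 : ℕ → ℕ → Set (Set ℝ))
    (h𝒞 : ∀ k j, 𝒞 k j =
      {M | ∃ k' j', k' ≤ N ∧ j' < 2 ^ k' ∧ (⋃₀ 𝒜 k' j') ∈ ℬ k j ∧ M ∈ 𝒜 k' j'}) :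
    JonesConds n 𝓜 𝒞 (κ ^ 2) := by
  have hκpos : 0 < κ := lt_of_lt_of_le one_pos hκ
  -- ⋃₀ 𝒞 = ⋃₀ ℬ
  have hCU : ∀ k j, k ≤ n → j < 2^k → ⋃₀ 𝒞 k j = ⋃₀ ℬ k j := by
    intro k j hk hj
    apply Set.Subset.antisymm
    · rintro x ⟨M, hM, hxM⟩
      rw [h𝒞] at hM
      obtain ⟨k', j', hk', hj', hBmem, hMA⟩ := hM
      exact ⟨⋃₀ 𝒜 k' j', hBmem, M, hMA, hxM⟩
    · rintro x ⟨B, hB', hxB⟩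
      obtain ⟨k', j', hk', hj', rfl⟩ := (hB.1.2.2 k j hk hj).2 hB'
      obtain ⟨M, hM, hxM⟩ := hxB
      exact ⟨M, by rw [h𝒞]; exact ⟨k', j', hk', hj', hB', hM⟩, hxM⟩
  -- properties of the unions ⋃₀ ℬ k j
  have hUB : ∀ k j, k ≤ n → j < 2^k →
      MeasurableSet (⋃₀ ℬ k j) ∧ volume (⋃₀ ℬ k j) < ⊤ ∧ 0 < msr (⋃₀ ℬ k j) := by
    intro k j hk hj
    obtain ⟨hfin, hsubN⟩ := hB.1.2.2 k j hk hj
    have hm : MeasurableSet (⋃₀ ℬ k j) :=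
      Set.Finite.measurableSet_sUnion hfin (fun B hb => (hB.1.1 B (hsubN hb)).1)
    have hv : volume (⋃₀ ℬ k j) < ⊤ := by
      rw [Set.sUnion_eq_biUnion]
      exact measure_biUnion_lt_top hfin (fun B hb => (hB.1.1 B (hsubN hb)).2.2)
    obtain ⟨B, hBm⟩ := (hB.2.1.1 k j hk hj).1
    have hpos : 0 < volume (⋃₀ ℬ k j) :=
      lt_of_lt_of_le (hB.1.1 B (hsubN hBm)).2.1 (measure_mono (Set.subset_sUnion_of_mem hBm))
    exact ⟨hm, hv, ENNReal.toReal_pos hpos.ne' hv.ne⟩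
  refine ⟨⟨hA.1.1, hA.1.2.1, ?_⟩, ⟨?_, ?_⟩, ⟨?_, ?_⟩, ?_⟩
  · -- (J1) finiteness and ⊆ 𝓜
    intro k j hk hj
    constructor
    · have hSfin : ({p : ℕ × ℕ | p.1 ≤ N ∧ p.2 < 2^p.1}).Finite := by
        apply Set.Finite.subset ((Set.finite_Iic N).prod (Set.finite_Iio (2^N)))
        rintro ⟨a, b⟩ ⟨ha, hb⟩
        exact ⟨Set.mem_Iic.mpr ha,
          Set.mem_Iio.mpr (lt_of_lt_of_le hb (Nat.pow_le_pow_right (by norm_num) ha))⟩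
      apply Set.Finite.subset (Set.Finite.biUnion hSfin
        (fun p hp => (hA.1.2.2 p.1 p.2 hp.1 hp.2).1))
      intro M hM
      rw [h𝒞] at hM
      obtain ⟨k', j', hk', hj', _, hMA⟩ := hM
      exact Set.mem_biUnion (show ((k', j') : ℕ × ℕ) ∈ {p : ℕ × ℕ | p.1 ≤ N ∧ p.2 < 2^p.1} from ⟨hk', hj'⟩) hMA
    · intro M hM
      rw [h𝒞] at hM
      obtain ⟨k', j', hk', hj', _, hMA⟩ := hM
      exact (hA.1.2.2 k' j' hk' hj').2 hMA
  · -- (J2a)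
    intro k j hk hj
    constructor
    · obtain ⟨B, hBm⟩ := (hB.2.1.1 k j hk hj).1
      obtain ⟨k', j', hk', hj', rfl⟩ := (hB.1.2.2 k j hk hj).2 hBm
      obtain ⟨M, hM⟩ := (hA.2.1.1 k' j' hk' hj').1
      exact ⟨M, by rw [h𝒞]; exact ⟨k', j', hk', hj', hBm, hM⟩⟩
    · intro M hM M' hM' hne
      rw [h𝒞] at hM hM'
      obtain ⟨k1, j1, hk1, hj1, hB1, hM1⟩ := hM
      obtain ⟨k2, j2, hk2, hj2, hB2, hM2⟩ := hM'
      by_cases hij : k1 = k2 ∧ j1 = j2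
      · obtain ⟨rfl, rfl⟩ := hij
        exact (hA.2.1.1 k1 j1 hk1 hj1).2 M hM1 M' hM2 hne
      · have hAne : ⋃₀ 𝒜 k1 j1 ≠ ⋃₀ 𝒜 k2 j2 :=
          fun h => hij (A_inj hA hk1 hj1 hk2 hj2 h)
        have hdisj := (hB.2.1.1 k j hk hj).2 _ hB1 _ hB2 hAne
        rw [Set.eq_empty_iff_forall_notMem]
        rintro x ⟨hx1, hx2⟩
        exact Set.eq_empty_iff_forall_notMem.mp hdisj x
          ⟨⟨M, hM1, hx1⟩, ⟨M', hM2, hx2⟩⟩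
  · -- (J2b)
    intro k j k' j' hk hj hk' hj' hne
    rw [Set.eq_empty_iff_forall_notMem]
    rintro M ⟨hM1, hM2⟩
    rw [h𝒞] at hM1 hM2
    obtain ⟨k1, j1, hk1, hj1, hB1, hMA1⟩ := hM1
    obtain ⟨k2, j2, hk2, hj2, hB2, hMA2⟩ := hM2
    have hBdisj := hB.2.1.2 k j k' j' hk hj hk' hj' hne
    have hAne : ⋃₀ 𝒜 k1 j1 ≠ ⋃₀ 𝒜 k2 j2 := by
      intro h
      exact Set.eq_empty_iff_forall_notMem.mp hBdisj _ ⟨hB1, by rw [h]; exact hB2⟩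
    have hij : (k1, j1) ≠ (k2, j2) := by
      intro h
      rw [Prod.mk.injEq] at h
      exact hAne (by rw [h.1, h.2])
    have hAdisj := hA.2.1.2 k1 j1 k2 j2 hk1 hj1 hk2 hj2 hij
    exact Set.eq_empty_iff_forall_notMem.mp hAdisj M ⟨hMA1, hMA2⟩
  · -- (J3) disjoint
    intro k j k' j' hk hj hk' hj' hd
    rw [hCU k j hk hj, hCU k' j' hk' hj']
    exact hB.2.2.1.1 k j k' j' hk hj hk' hj' hd
  · -- (J3) subset
    intro k j k' j' hk hj hk' hj' hs
    rw [hCU k j hk hj, hCU k' j' hk' hj']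
    exact hB.2.2.1.2 k j k' j' hk hj hk' hj' hs
  · -- (J4)
    intro k j k' j' hk hj hk' hj' hd M hM
    rw [hCU k j hk hj, hCU k' j' hk' hj']
    rw [h𝒞] at hM
    obtain ⟨k2, j2, hk2, hj2, hB', hMA⟩ := hM
    set B' := ⋃₀ 𝒜 k2 j2 with hB'def
    have hM𝓜 : M ∈ 𝓜 := (hA.1.2.2 k2 j2 hk2 hj2).2 hMA
    obtain ⟨hMmeas, hMvpos, hMvfin⟩ := hA.1.1 M hM𝓜
    have hMpos : 0 < msr M := ENNReal.toReal_pos hMvpos.ne' hMvfin.ne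
    have hB'𝒩 : B' ∈ {S | ∃ k j, k ≤ N ∧ j < 2 ^ k ∧ S = ⋃₀ 𝒜 k j} :=
      (hB.1.2.2 k' j' hk' hj').2 hB'
    obtain ⟨hB'meas, hB'vpos, hB'vfin⟩ := hB.1.1 B' hB'𝒩
    have hB'pos : 0 < msr B' := ENNReal.toReal_pos hB'vpos.ne' hB'vfin.ne
    obtain ⟨hUmeas, hUvfin, hUpos⟩ := hUB k j hk hj
    obtain ⟨hU'meas, hU'vfin, hU'pos⟩ := hUB k' j' hk' hj'
    have hMsubB' : M ⊆ B' := Set.subset_sUnion_of_mem hMA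
    by_cases hez : ∃ B ∈ ℬ k j, B' ⊆ B
    · -- easy case: some B ∈ ℬ k j contains B'
      obtain ⟨B, hBm, hB'B⟩ := hez
      have hMsubU : M ⊆ ⋃₀ ℬ k j :=
        hMsubB'.trans (hB'B.trans (Set.subset_sUnion_of_mem hBm))
      rw [Set.inter_eq_self_of_subset_left hMsubU, div_self hMpos.ne', ge_iff_le]
      have hUsub : ⋃₀ ℬ k j ⊆ ⋃₀ ℬ k' j' := hB.2.2.1.2 k j k' j' hk hj hk' hj' hd
      have hle : msr (⋃₀ ℬ k j) ≤ msr (⋃₀ ℬ k' j') :=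
        ENNReal.toReal_mono hU'vfin.ne (measure_mono hUsub)
      have h2 : msr (⋃₀ ℬ k j) / msr (⋃₀ ℬ k' j') ≤ 1 :=
        div_le_one_of_le₀ hle ENNReal.toReal_nonneg
      have h3 : (κ^2)⁻¹ ≤ 1 := inv_le_one_of_one_le₀ (by nlinarith)
      calc (κ^2)⁻¹ * msr (⋃₀ ℬ k j) / msr (⋃₀ ℬ k' j')
          = (κ^2)⁻¹ * (msr (⋃₀ ℬ k j) / msr (⋃₀ ℬ k' j')) := by rw [mul_div_assoc]
        _ ≤ 1 * 1 := mul_le_mul h3 h2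
            (div_nonneg ENNReal.toReal_nonneg ENNReal.toReal_nonneg) one_pos.le
        _ = 1 := one_mul 1
    · -- hard case: every B ∈ ℬ k j meeting B' is contained in B'
      push_neg at hez
      have hBsubN := (hB.1.2.2 k j hk hj).2
      have hBfin := (hB.1.2.2 k j hk hj).1
      set 𝒮 : Set (Set ℝ) := {B ∈ ℬ k j | (B' ∩ B).Nonempty} with h𝒮
      have h𝒮fin : 𝒮.Finite := hBfin.subset (Set.sep_subset _ _)
      have h𝒮sub : ∀ B ∈ 𝒮, B ⊆ B' := by
        rintro B ⟨hBm, hBne⟩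
        rcases hB.1.2.1 B' hB'𝒩 B (hBsubN hBm) hBne with h | h
        · exact absurd h (hez B hBm)
        · exact h
      set s := h𝒮fin.toFinset with hs
      have hmem : ∀ B, B ∈ s ↔ B ∈ ℬ k j ∧ (B' ∩ B).Nonempty := by
        intro B; rw [Set.Finite.mem_toFinset]; exact Iff.rfl
      have hinter : B' ∩ ⋃₀ ℬ k j = ⋃ B ∈ s, B := by
        ext x
        simp only [Set.mem_inter_iff, Set.mem_sUnion, Set.mem_iUnion, exists_prop, hmem]
        constructor
        · rintro ⟨hxB', B, hBm, hxB⟩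
          exact ⟨B, ⟨hBm, ⟨x, hxB', hxB⟩⟩, hxB⟩
        · rintro ⟨B, hB𝒮, hxB⟩
          exact ⟨h𝒮sub B hB𝒮 hxB, B, hB𝒮.1, hxB⟩
      have hBmeasE : ∀ B ∈ ℬ k j, MeasurableSet B := fun B hb => (hB.1.1 B (hBsubN hb)).1
      have hpd : (↑s : Set (Set ℝ)).PairwiseDisjoint id := by
        intro a ha b hb hab
        rw [Finset.mem_coe, hmem] at ha hb
        exact Set.disjoint_iff_inter_eq_empty.mpr
          ((hB.2.1.1 k j hk hj).2 a ha.1 b hb.1 hab)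
      have hv1 : volume (⋃ B ∈ s, B) = ∑ B ∈ s, volume B :=
        measure_biUnion_finset hpd (fun B hb => hBmeasE B ((hmem B).mp hb).1)
      have h1 : msr (B' ∩ ⋃₀ ℬ k j) = ∑ B ∈ s, msr B := by
        rw [msr, hinter, hv1,
          ENNReal.toReal_sum (fun B hb => (hB.1.1 B (hBsubN ((hmem B).mp hb).1)).2.2.ne)]
        rfl
      have hMU : (⋃ B ∈ s, M ∩ B) ⊆ M ∩ ⋃₀ ℬ k j := by
        simp only [Set.iUnion_subset_iff]
        intro B hb
        exact Set.inter_subset_inter_right M (Set.subset_sUnion_of_mem ((hmem B).mp hb).1)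
      have hpd2 : (↑s : Set (Set ℝ)).PairwiseDisjoint (fun B => M ∩ B) := by
        intro a ha b hb hab
        exact Disjoint.mono Set.inter_subset_right Set.inter_subset_right (hpd ha hb hab)
      have hvol2 : volume (⋃ B ∈ s, M ∩ B) = ∑ B ∈ s, volume (M ∩ B) :=
        measure_biUnion_finset hpd2 (fun B hb => hMmeas.inter (hBmeasE B ((hmem B).mp hb).1))
      have h2 : ∑ B ∈ s, msr (M ∩ B) ≤ msr (M ∩ ⋃₀ ℬ k j) := by
        have hfin : volume (M ∩ ⋃₀ ℬ k j) ≠ ⊤ :=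
          (lt_of_le_of_lt (measure_mono Set.inter_subset_left) hMvfin).ne
        have := ENNReal.toReal_mono hfin (hvol2 ▸ measure_mono hMU)
        rwa [ENNReal.toReal_sum
          (fun B hb => (lt_of_le_of_lt (measure_mono Set.inter_subset_left) hMvfin).ne)] at this
      have h3 : ∀ B ∈ s, κ⁻¹ * msr B * msr M / msr B' ≤ msr (M ∩ B) := by
        intro B hb
        rw [hmem] at hb
        obtain ⟨hBm, hBne⟩ := hb
        obtain ⟨k1, j1, hk1, hj1, rfl⟩ := hBsubN hBm
        have hdy : dyadicSet k1 j1 ⊆ dyadicSet k2 j2 :=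
          A_dyadic_sub hA hk1 hj1 hk2 hj2 (h𝒮sub _ ⟨hBm, hBne⟩)
        have hineq := hA.2.2.2 k1 j1 k2 j2 hk1 hj1 hk2 hj2 hdy M hMA
        rw [ge_iff_le, le_div_iff₀ hMpos] at hineq
        calc κ⁻¹ * msr (⋃₀ 𝒜 k1 j1) * msr M / msr B'
            = κ⁻¹ * msr (⋃₀ 𝒜 k1 j1) / msr B' * msr M := by ring
          _ ≤ msr (M ∩ ⋃₀ 𝒜 k1 j1) := hineq
      have h4 : κ⁻¹ * msr M / msr B' * msr (B' ∩ ⋃₀ ℬ k j) ≤ msr (M ∩ ⋃₀ ℬ k j) := by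
        calc κ⁻¹ * msr M / msr B' * msr (B' ∩ ⋃₀ ℬ k j)
            = ∑ B ∈ s, κ⁻¹ * msr B * msr M / msr B' := by
              rw [h1, Finset.mul_sum]
              exact Finset.sum_congr rfl (fun B _ => by ring)
          _ ≤ ∑ B ∈ s, msr (M ∩ B) := Finset.sum_le_sum h3
          _ ≤ _ := h2
      have h5 := hB.2.2.2 k j k' j' hk hj hk' hj' hd B' hB'
      rw [ge_iff_le, le_div_iff₀ hB'pos] at h5
      rw [ge_iff_le, le_div_iff₀ hMpos]
      have hc : 0 ≤ κ⁻¹ * msr M / msr B' :=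
        div_nonneg (mul_nonneg (inv_nonneg.mpr hκpos.le) hMpos.le) ENNReal.toReal_nonneg
      calc (κ^2)⁻¹ * msr (⋃₀ ℬ k j) / msr (⋃₀ ℬ k' j') * msr M
          = κ⁻¹ * msr M / msr B' *
              (κ⁻¹ * msr (⋃₀ ℬ k j) / msr (⋃₀ ℬ k' j') * msr B') := by
            rw [sq, mul_inv]
            field_simp
        _ ≤ κ⁻¹ * msr M / msr B' * msr (B' ∩ ⋃₀ ℬ k j) := mul_le_mul_of_nonneg_left h5 hc
        _ ≤ msr (M ∩ ⋃₀ ℬ k j) := h4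
end

section
/- Let L : ℓ^∞ → ℝ be a norm-one functional with L(1,1,1,...) = 1, and define Q : (∑_{n∈ℕ₀} SL^∞_n)_∞ → SL^∞ by (∑_{I∈𝒟ⁿ} a_{n,I} h_I)_{n=0}^∞ ↦ ∑_{I∈𝒟} L((a_{n,I})_{n=0}^∞) h_I, where a_{n,I} = 0 for |I| < 2^{−n}. Then ‖Q‖ ≤ 1: if sup_n ‖∑_I a_{n,I} h_I‖_{SL^∞} ≤ 1 then for every dyadic interval I₀, ∑_{I ⊇ I₀} L((a_{n,I})_n)² ≤ 1. -/
open scoped ENNReal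

/-- The operator `Q : (∑_n SL^∞_n)_∞ → SL^∞` built from a norm-one functional
`L : ℓ^∞ → ℝ` with `L(1,1,1,…) = 1`, sending `(∑_{I∈𝒟ⁿ} a_{n,I} h_I)_n` to
`∑_{I∈𝒟} L((a_{n,I})_n) h_I`, has norm at most `1`: if
`sup_n ‖∑_I a_{n,I} h_I‖_{SL^∞} ≤ 1` — that is, every chain sum
`∑_{I ⊇ I₀} a_{n,I}² ≤ 1` — then for every dyadic interval `I₀ = (k₀, j₀)`,
`∑_{I ⊇ I₀} L((a_{n,I})_n)² ≤ 1`.  (The ancestor of `I₀` at level `k ≤ k₀` is the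
interval with position `j₀ / 2^{k₀-k}`; `A k j ∈ ℓ^∞` is the sequence `(a_{n,I})_n` for
`I = (k, j)`.) -/
theorem Q_operator_norm_le_one
    (L : lp (fun _ : ℕ => ℝ) ∞ →L[ℝ] ℝ) (hL : ‖L‖ = 1)
    (one : lp (fun _ : ℕ => ℝ) ∞) (hone : ∀ n : ℕ, one n = 1) (hL1 : L one = 1)
    (a : ℕ → ℕ → ℕ → ℝ)
    (hsupp : ∀ n k j, n < k → a n k j = 0)
    (hnorm : ∀ n k₀ j₀, j₀ < 2 ^ k₀ →
      ∑ k ∈ Finset.range (k₀ + 1), (a n k (j₀ / 2 ^ (k₀ - k))) ^ 2 ≤ 1)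
    (A : ℕ → ℕ → lp (fun _ : ℕ => ℝ) ∞)
    (hA : ∀ k j m, A k j m = a m k j) :
    ∀ k₀ j₀, j₀ < 2 ^ k₀ →
      ∑ k ∈ Finset.range (k₀ + 1), (L (A k (j₀ / 2 ^ (k₀ - k)))) ^ 2 ≤ 1 := by
  intro k₀ j₀ hj₀
  set s := Finset.range (k₀ + 1) with hs
  set j : ℕ → ℕ := fun k => j₀ / 2 ^ (k₀ - k) with hj
  set c : ℕ → ℝ := fun k => L (A k (j k)) with hc
  set S : ℝ := ∑ k ∈ s, (c k) ^ 2 with hS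
  have hSnn : 0 ≤ S := Finset.sum_nonneg fun k _ => sq_nonneg _
  set v : lp (fun _ : ℕ => ℝ) ∞ := ∑ k ∈ s, c k • A k (j k) with hv
  -- coordinates of v
  have hvn : ∀ n : ℕ, v n = ∑ k ∈ s, c k * a n k (j k) := by
    intro n
    rw [hv]
    induction s using Finset.induction_on with
    | empty => simp [lp.coeFn_zero]
    | insert _ _ hx ih =>
        rw [Finset.sum_insert hx, Finset.sum_insert hx, lp.coeFn_add, Pi.add_apply,
          lp.coeFn_smul, Pi.smul_apply, ih, hA, smul_eq_mul]
  -- L v = S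
  have hLv : L v = S := by
    rw [hv, map_sum]
    simp only [map_smul, smul_eq_mul, hS, hc, sq]
  -- norm bound on v
  have hvnorm : ‖v‖ ≤ Real.sqrt S := by
    apply lp.norm_le_of_forall_le (Real.sqrt_nonneg S)
    intro n
    have h1 : (∑ k ∈ s, c k * a n k (j k)) ^ 2 ≤ S * 1 := by
      calc (∑ k ∈ s, c k * a n k (j k)) ^ 2
          ≤ (∑ k ∈ s, (c k) ^ 2) * ∑ k ∈ s, (a n k (j k)) ^ 2 :=
            Finset.sum_mul_sq_le_sq_mul_sq s _ _
        _ ≤ S * 1 := by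
            apply mul_le_mul_of_nonneg_left (hnorm n k₀ j₀ hj₀)
              hSnn
    rw [mul_one] at h1
    have : ‖v n‖ = |∑ k ∈ s, c k * a n k (j k)| := by rw [hvn n, Real.norm_eq_abs]
    rw [this, ← Real.sqrt_sq_eq_abs]
    exact Real.sqrt_le_sqrt h1
  have hfinal : S ≤ Real.sqrt S := by
    calc S = L v := hLv.symm
      _ ≤ ‖L‖ * ‖v‖ := le_trans (le_abs_self _) (L.le_opNorm v)
      _ = ‖v‖ := by rw [hL, one_mul]
      _ ≤ Real.sqrt S := hvnorm
  nlinarith [Real.sq_sqrt hSnn, Real.sqrt_nonneg S]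
end
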